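/- arXiv:2410.20760 — 9 statements merged into one kernel-verified Lean document; each statement's English description precedes it below -/
import Mathlib

section
/- Let X be a Polish (complete separable metric) space with its Borel σ-algebra, and let H be a reproducing kernel Hilbert space of real-valued functions on X that is universal, i.e., for every bounded continuous g : X → ℝ and every η > 0 there exists h ∈ H with sup_x |g(x) − h(x)| < η. Suppose σ satisfies Assumption (B). Then for all Borel probability measures P, Q on X: STV_{H,σ}(P,Q) = TV(P,Q), and moreover lim_{U→∞} STV_{H_U,σ}(P,Q) = TV(P,Q), where H_U := {f ∈ H : ‖f‖ ≤ U}. -/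
open MeasureTheory Filter
open scoped ENNReal NNReal

noncomputable def TV {X : Type*} [MeasurableSpace X] (P Q : Measure X) : ℝ :=
  ⨆ A : {A : Set X // MeasurableSet A}, |(P A.1).toReal - (Q A.1).toReal|

noncomputable def STV {X : Type*} [MeasurableSpace X] (𝒰 : Set (X → ℝ)) (σ : ℝ → ℝ)
    (P Q : Measure X) : ℝ :=
  ⨆ ub : 𝒰 × ℝ, |∫ x, σ (ub.1.1 x - ub.2) ∂P - ∫ x, σ (ub.1.1 x - ub.2) ∂Q|

noncomputable def stepFun : ℝ → ℝ := fun x => if 0 ≤ x then 1 else 0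

noncomputable def sigmoid : ℝ → ℝ := fun z => 1 / (1 + Real.exp (-z))

def AssumptionB (σ : ℝ → ℝ) : Prop :=
  Continuous σ ∧ StrictMono σ ∧ Tendsto σ atBot (nhds 0) ∧ Tendsto σ atTop (nhds 1) ∧
    ∀ z, σ z + σ (-z) = 1

def DecayRate (σ : ℝ → ℝ) (C₀ : ℝ) (lam : ℝ → ℝ) : Prop :=
  Tendsto lam atTop (nhds 0) ∧ ∀ c, C₀ < c → ∀ t, 1 ≤ t → σ (-(c * Real.log t)) * (t - 1) ≤ lam c

noncomputable def evalH {X H : Type*} [NormedAddCommGroup H] [InnerProductSpace ℝ H]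
    (φ : X → H) (f : H) : X → ℝ := fun x => (inner ℝ f (φ x) : ℝ)

noncomputable def ballFuns {X H : Type*} [NormedAddCommGroup H] [InnerProductSpace ℝ H]
    (φ : X → H) (U : ℝ) : Set (X → ℝ) := evalH φ '' {h : H | ‖h‖ ≤ U}

noncomputable def logPartition {X H : Type*} [MeasurableSpace X] [NormedAddCommGroup H]
    [InnerProductSpace ℝ H] (μ : Measure X) (φ : X → H) (f : H) : ℝ :=
  Real.log (∫ x, Real.exp (evalH φ f x) ∂μ)

noncomputable def Pexp {X H : Type*} [MeasurableSpace X] [NormedAddCommGroup H]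
    [InnerProductSpace ℝ H] (μ : Measure X) (φ : X → H) (f : H) : Measure X :=
  μ.withDensity fun x => ENNReal.ofReal (Real.exp (evalH φ f x - logPartition μ φ f))

noncomputable def empMeasure {X : Type*} [MeasurableSpace X] {n : ℕ} (xs : Fin n → X) : Measure X :=
  (n : ℝ≥0∞)⁻¹ • ∑ i, Measure.dirac (xs i)

noncomputable def STVb {X : Type*} [MeasurableSpace X] (𝒰 : Set (X → ℝ)) (σ : ℝ → ℝ) (U : ℝ)
    (P Q : Measure X) : ℝ :=
  ⨆ ub : 𝒰 × {b : ℝ // |b| ≤ U}, |∫ x, σ (ub.1.1 x - ub.2.1) ∂P - ∫ x, σ (ub.1.1 x - ub.2.1) ∂Q|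

/- ### Auxiliary lemmas -/

section Aux

variable {X : Type*} [MeasurableSpace X]

lemma sigma_mem_Ioo {σ : ℝ → ℝ} (hB : AssumptionB σ) (z : ℝ) : σ z ∈ Set.Ioo (0:ℝ) 1 := by
  obtain ⟨hc, hm, hbot, htop, hsym⟩ := hB
  constructor
  · have h1 : σ (z - 1) < σ z := hm (by linarith)
    have h2 : (0:ℝ) ≤ σ (z - 1) := by
      refine le_of_tendsto hbot ?_
      filter_upwards [eventually_le_atBot (z - 1)] with t ht
      exact hm.monotone ht
    linarith
  · have h1 : σ z < σ (z + 1) := hm (by linarith)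
    have h2 : σ (z + 1) ≤ 1 := by
      refine ge_of_tendsto htop ?_
      filter_upwards [eventually_ge_atTop (z + 1)] with t ht
      exact hm.monotone ht
    linarith

lemma prob_toReal_le_one (P : Measure X) [IsProbabilityMeasure P] (A : Set X) :
    (P A).toReal ≤ 1 := by
  have := prob_le_one (μ := P) (s := A)
  simpa using ENNReal.toReal_mono (by simp) this

lemma TV_bddAbove (P Q : Measure X) [IsProbabilityMeasure P] [IsProbabilityMeasure Q] :
    BddAbove (Set.range fun A : {A : Set X // MeasurableSet A} =>
      |(P A.1).toReal - (Q A.1).toReal|) := by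
  refine ⟨1, ?_⟩
  rintro _ ⟨A, rfl⟩
  have h1 := prob_toReal_le_one P A.1
  have h2 := prob_toReal_le_one Q A.1
  have h3 : (0:ℝ) ≤ (P A.1).toReal := ENNReal.toReal_nonneg
  have h4 : (0:ℝ) ≤ (Q A.1).toReal := ENNReal.toReal_nonneg
  rw [abs_sub_le_iff]; constructor <;> linarith

lemma TV_nonneg (P Q : Measure X) : 0 ≤ TV P Q :=
  Real.iSup_nonneg fun _ => abs_nonneg _

lemma abs_sub_le_TV (P Q : Measure X) [IsProbabilityMeasure P] [IsProbabilityMeasure Q]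
    {A : Set X} (hA : MeasurableSet A) :
    |(P A).toReal - (Q A).toReal| ≤ TV P Q :=
  le_ciSup (TV_bddAbove P Q) (⟨A, hA⟩ : {A : Set X // MeasurableSet A})

lemma TV_symm (P Q : Measure X) : TV P Q = TV Q P := by
  unfold TV
  congr 1; funext A; rw [abs_sub_comm]

lemma integrable_of_bounds (P : Measure X) [IsProbabilityMeasure P] {f : X → ℝ}
    (hf : Measurable f) (h0 : ∀ x, 0 ≤ f x) (h1 : ∀ x, f x ≤ 1) : Integrable f P := by
  refine ⟨hf.aestronglyMeasurable, ?_⟩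
  refine HasFiniteIntegral.of_bounded (C := 1) ?_
  filter_upwards with x
  rw [Real.norm_eq_abs, abs_le]
  exact ⟨by linarith [h0 x], h1 x⟩

lemma integral_sub_le_TV (P Q : Measure X) [IsProbabilityMeasure P] [IsProbabilityMeasure Q]
    {f : X → ℝ} (hfm : Measurable f) (h0 : ∀ x, 0 ≤ f x) (h1 : ∀ x, f x ≤ 1) :
    ∫ x, f x ∂P - ∫ x, f x ∂Q ≤ TV P Q := by
  obtain ⟨s, hs, hQP, hPQ⟩ := hahn_decomposition (μ := P) (ν := Q)
  have hintP : Integrable f P := integrable_of_bounds P hfm h0 h1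
  have hintQ : Integrable f Q := integrable_of_bounds Q hfm h0 h1
  have hint1P : Integrable (fun x => (1:ℝ) - f x) P :=
    (integrable_const 1).sub hintP
  have hint1Q : Integrable (fun x => (1:ℝ) - f x) Q :=
    (integrable_const 1).sub hintQ
  -- on sᶜ, P ≤ Q
  have hle_c : P.restrict sᶜ ≤ Q.restrict sᶜ := by
    refine Measure.le_iff.2 fun t ht => ?_
    rw [Measure.restrict_apply ht, Measure.restrict_apply ht]
    exact hPQ _ (ht.inter hs.compl) Set.inter_subset_right
  have hle_s : Q.restrict s ≤ P.restrict s := by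
    refine Measure.le_iff.2 fun t ht => ?_
    rw [Measure.restrict_apply ht, Measure.restrict_apply ht]
    exact hQP _ (ht.inter hs) Set.inter_subset_right
  have h2 : ∫ x in sᶜ, f x ∂P ≤ ∫ x in sᶜ, f x ∂Q :=
    integral_mono_measure hle_c (Filter.Eventually.of_forall h0) hintQ.restrict
  have h3 : ∫ x in s, (1 - f x) ∂Q ≤ ∫ x in s, (1 - f x) ∂P :=
    integral_mono_measure hle_s
      (Filter.Eventually.of_forall fun x => by simpa using h1 x) hint1P.restrict
  have e1 : ∫ x in s, (1 - f x) ∂P = (P s).toReal - ∫ x in s, f x ∂P := by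
    rw [integral_sub (integrable_const 1).restrict hintP.restrict]
    simp [Measure.restrict_apply_univ]; rfl
  have e2 : ∫ x in s, (1 - f x) ∂Q = (Q s).toReal - ∫ x in s, f x ∂Q := by
    rw [integral_sub (integrable_const 1).restrict hintQ.restrict]
    simp [Measure.restrict_apply_univ]; rfl
  have h4 : ∫ x in s, f x ∂P - ∫ x in s, f x ∂Q ≤ (P s).toReal - (Q s).toReal := by
    rw [e1, e2] at h3; linarith
  have hsplitP : ∫ x in s, f x ∂P + ∫ x in sᶜ, f x ∂P = ∫ x, f x ∂P :=
    integral_add_compl hs hintP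
  have hsplitQ : ∫ x in s, f x ∂Q + ∫ x in sᶜ, f x ∂Q = ∫ x, f x ∂Q :=
    integral_add_compl hs hintQ
  have htv : (P s).toReal - (Q s).toReal ≤ TV P Q :=
    (le_abs_self _).trans (abs_sub_le_TV P Q hs)
  linarith

lemma abs_integral_sub_le_TV (P Q : Measure X) [IsProbabilityMeasure P] [IsProbabilityMeasure Q]
    {f : X → ℝ} (hfm : Measurable f) (h0 : ∀ x, 0 ≤ f x) (h1 : ∀ x, f x ≤ 1) :
    |∫ x, f x ∂P - ∫ x, f x ∂Q| ≤ TV P Q := by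
  rw [abs_sub_le_iff]
  refine ⟨integral_sub_le_TV P Q hfm h0 h1, ?_⟩
  rw [TV_symm]
  exact integral_sub_le_TV Q P hfm h0 h1

lemma STV_term_le_one (P Q : Measure X) [IsProbabilityMeasure P] [IsProbabilityMeasure Q]
    {f : X → ℝ} (hfm : Measurable f) (h0 : ∀ x, 0 ≤ f x) (h1 : ∀ x, f x ≤ 1) :
    |∫ x, f x ∂P - ∫ x, f x ∂Q| ≤ 1 := by
  have hP0 : 0 ≤ ∫ x, f x ∂P := integral_nonneg h0
  have hQ0 : 0 ≤ ∫ x, f x ∂Q := integral_nonneg h0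
  have hP1 : ∫ x, f x ∂P ≤ 1 := by
    calc ∫ x, f x ∂P ≤ ∫ _, (1:ℝ) ∂P :=
          integral_mono (integrable_of_bounds P hfm h0 h1) (integrable_const 1) h1
    _ = 1 := by simp
  have hQ1 : ∫ x, f x ∂Q ≤ 1 := by
    calc ∫ x, f x ∂Q ≤ ∫ _, (1:ℝ) ∂Q :=
          integral_mono (integrable_of_bounds Q hfm h0 h1) (integrable_const 1) h1
    _ = 1 := by simp
  rw [abs_sub_le_iff]; constructor <;> linarith

lemma STV_le_TV (P Q : Measure X) [IsProbabilityMeasure P] [IsProbabilityMeasure Q]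
    {𝒰 : Set (X → ℝ)} (h𝒰 : ∀ f ∈ 𝒰, Measurable f) {σ : ℝ → ℝ} (hB : AssumptionB σ) :
    STV 𝒰 σ P Q ≤ TV P Q := by
  refine Real.iSup_le (fun ub => ?_) (TV_nonneg P Q)
  have hm : Measurable fun x => σ (ub.1.1 x - ub.2) :=
    hB.1.measurable.comp ((h𝒰 _ ub.1.2).sub measurable_const)
  exact abs_integral_sub_le_TV P Q hm (fun x => (sigma_mem_Ioo hB _).1.le)
    (fun x => (sigma_mem_Ioo hB _).2.le)

lemma STV_bddAbove (P Q : Measure X) [IsProbabilityMeasure P] [IsProbabilityMeasure Q]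
    {𝒰 : Set (X → ℝ)} (h𝒰 : ∀ f ∈ 𝒰, Measurable f) {σ : ℝ → ℝ} (hB : AssumptionB σ) :
    BddAbove (Set.range fun ub : 𝒰 × ℝ =>
      |∫ x, σ (ub.1.1 x - ub.2) ∂P - ∫ x, σ (ub.1.1 x - ub.2) ∂Q|) := by
  refine ⟨1, ?_⟩
  rintro _ ⟨ub, rfl⟩
  have hm : Measurable fun x => σ (ub.1.1 x - ub.2) :=
    hB.1.measurable.comp ((h𝒰 _ ub.1.2).sub measurable_const)
  exact STV_term_le_one P Q hm (fun x => (sigma_mem_Ioo hB _).1.le)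
    (fun x => (sigma_mem_Ioo hB _).2.le)

end Aux

section Main

variable {X : Type*} [TopologicalSpace X] [PolishSpace X] [MeasurableSpace X] [BorelSpace X]
  {H : Type*} [NormedAddCommGroup H] [InnerProductSpace ℝ H]

/-- For one probability measure: the integral of `σ ∘ u` is close to the measure of `A`. -/
lemma integral_close (P : Measure X) [IsProbabilityMeasure P]
    {σ : ℝ → ℝ} (hB : AssumptionB σ) {u : X → ℝ} (hu : Measurable u)
    {A F G : Set X} (hA : MeasurableSet A) (hGF : MeasurableSet (G \ F))
    {c : ℝ}
    (hbd : ∀ x, |σ (u x) - A.indicator (fun _ => (1:ℝ)) x| ≤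
      (1 - σ (c - 1)) + (G \ F).indicator (fun _ => (1:ℝ)) x) :
    |∫ x, σ (u x) ∂P - (P A).toReal| ≤ (1 - σ (c - 1)) + (P (G \ F)).toReal := by
  have hσm : Measurable fun x => σ (u x) := hB.1.measurable.comp hu
  have hint1 : Integrable (fun x => σ (u x)) P :=
    integrable_of_bounds P hσm (fun x => (sigma_mem_Ioo hB _).1.le)
      (fun x => (sigma_mem_Ioo hB _).2.le)
  have hint2 : Integrable (A.indicator fun _ => (1:ℝ)) P :=
    (integrable_const (1:ℝ)).indicator hA
  have hint3 : Integrable ((G \ F).indicator fun _ => (1:ℝ)) P :=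
    (integrable_const (1:ℝ)).indicator hGF
  have hindA : ∫ x, A.indicator (fun _ => (1:ℝ)) x ∂P = (P A).toReal := by
    rw [integral_indicator_const (1:ℝ) hA]; simp; rfl
  have hindGF : ∫ x, (G \ F).indicator (fun _ => (1:ℝ)) x ∂P = (P (G \ F)).toReal := by
    rw [integral_indicator_const (1:ℝ) hGF]; simp; rfl
  calc |∫ x, σ (u x) ∂P - (P A).toReal|
      = |∫ x, (σ (u x) - A.indicator (fun _ => (1:ℝ)) x) ∂P| := by
        rw [integral_sub hint1 hint2, hindA]
    _ ≤ ∫ x, |σ (u x) - A.indicator (fun _ => (1:ℝ)) x| ∂P := by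
        simpa [Real.norm_eq_abs] using
          norm_integral_le_integral_norm (μ := P)
            (fun x => σ (u x) - A.indicator (fun _ => (1:ℝ)) x)
    _ ≤ ∫ x, ((1 - σ (c - 1)) + (G \ F).indicator (fun _ => (1:ℝ)) x) ∂P := by
        refine integral_mono ((hint1.sub hint2).abs) ((integrable_const _).add hint3) hbd
    _ = (1 - σ (c - 1)) + (P (G \ F)).toReal := by
        rw [integral_add (integrable_const _) hint3, hindGF]; simp

/-- The key approximation lemma: any TV term is approximated by an STV term with `b = 0`. -/
lemma exists_approx (φ : X → H) (hφ : Continuous φ)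
    (huniv : ∀ (g : BoundedContinuousFunction X ℝ) (η : ℝ), 0 < η →
      ∃ h : H, ∀ x, |g x - evalH φ h x| < η)
    {σ : ℝ → ℝ} (hB : AssumptionB σ)
    (P Q : Measure X) [IsProbabilityMeasure P] [IsProbabilityMeasure Q]
    {A : Set X} (hA : MeasurableSet A) {ε : ℝ} (hε : 0 < ε) :
    ∃ h : H, |(P A).toReal - (Q A).toReal| - ε <
      |∫ x, σ (evalH φ h x - 0) ∂P - ∫ x, σ (evalH φ h x - 0) ∂Q| := by
  obtain ⟨hσc, hσm, hσbot, hσtop, hσsym⟩ := hB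
  have hB' : AssumptionB σ := ⟨hσc, hσm, hσbot, hσtop, hσsym⟩
  -- regularity of μ = P + Q
  set μ : Measure X := P + Q with hμ
  have hδ : (ENNReal.ofReal (ε/8)) ≠ 0 :=
    (ENNReal.ofReal_pos.2 (by linarith)).ne'
  obtain ⟨F, hFA, hFclosed, hμAF⟩ :=
    hA.exists_isClosed_diff_lt (measure_ne_top μ A) hδ
  obtain ⟨G, hAG, hGopen, -, hμGA⟩ :=
    hA.exists_isOpen_diff_lt (measure_ne_top μ A) hδ
  -- Urysohn
  have hnormal : NormalSpace X := by letI := TopologicalSpace.upgradeIsCompletelyMetrizable X; infer_instance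
  obtain ⟨g, hg0, hg1, hg01⟩ :=
    exists_continuous_zero_one_of_isClosed (hGopen.isClosed_compl) hFclosed
      (disjoint_compl_left.mono_right (hFA.trans hAG))
  -- choose c
  obtain ⟨t, htσ, ht0⟩ :=
    ((hσtop.eventually (eventually_gt_nhds (show 1 - ε/8 < 1 by linarith))).and
      (eventually_ge_atTop (0:ℝ))).exists
  set c : ℝ := t + 1 with hc
  have hc0 : 0 ≤ c := by linarith
  have hσc1 : 1 - ε/8 < σ (c - 1) := by simpa [hc] using htσ
  have hσc1' : σ (c - 1) ≤ 1 := (sigma_mem_Ioo hB' _).2.le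
  -- bounded continuous function w = c * (2 g - 1)
  have hwbound : ∀ x, ‖c * (2 * g x - 1)‖ ≤ c := by
    intro x
    have := hg01 x
    rw [Real.norm_eq_abs, abs_mul, abs_of_nonneg hc0]
    have : |2 * g x - 1| ≤ 1 := by
      rw [abs_le]; constructor <;> [linarith [(hg01 x).1]; linarith [(hg01 x).2]]
    nlinarith
  set w : BoundedContinuousFunction X ℝ :=
    BoundedContinuousFunction.ofNormedAddCommGroup (fun x => c * (2 * g x - 1))
      (by continuity) c hwbound with hw
  obtain ⟨h, hh⟩ := huniv w 1 one_pos
  set u : X → ℝ := evalH φ h with hudef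
  have hucont : Continuous u := Continuous.inner (𝕜 := ℝ) continuous_const hφ
  have hum : Measurable u := hucont.measurable
  have hGF : MeasurableSet (G \ F) := hGopen.measurableSet.diff hFclosed.measurableSet
  -- pointwise bound
  have hbd : ∀ x, |σ (u x) - A.indicator (fun _ => (1:ℝ)) x| ≤
      (1 - σ (c - 1)) + (G \ F).indicator (fun _ => (1:ℝ)) x := by
    intro x
    have hwx : |w x - u x| < 1 := hh x
    have hwx' : w x = c * (2 * g x - 1) := rfl
    have hσ01 := sigma_mem_Ioo hB' (u x)
    by_cases hxF : x ∈ F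
    · -- g x = 1, w x = c
      have hgx : g x = 1 := hg1 hxF
      have hwc : w x = c := by rw [hwx', hgx]; ring
      have hux : c - 1 ≤ u x := by
        rw [hwc] at hwx; obtain ⟨ha, hb⟩ := abs_lt.1 hwx; linarith
      have hσu : σ (c - 1) ≤ σ (u x) := hσm.monotone hux
      have hxA : x ∈ A := hFA hxF
      have hiA : A.indicator (fun _ => (1:ℝ)) x = 1 := Set.indicator_of_mem hxA _
      have hiGF : (G \ F).indicator (fun _ => (1:ℝ)) x = 0 :=
        Set.indicator_of_notMem (fun hx => hx.2 hxF) _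
      rw [hiA, hiGF, abs_sub_comm, abs_of_nonneg (by linarith [hσ01.2])]
      linarith
    · by_cases hxG : x ∈ G
      · -- middle region
        have hxGF : x ∈ G \ F := ⟨hxG, hxF⟩
        have hiGF : (G \ F).indicator (fun _ => (1:ℝ)) x = 1 :=
          Set.indicator_of_mem hxGF _
        rw [hiGF]
        have hiA : A.indicator (fun _ => (1:ℝ)) x ∈ Set.Icc (0:ℝ) 1 := by
          by_cases hxA : x ∈ A
          · simp [Set.indicator_of_mem hxA]
          · simp [Set.indicator_of_notMem hxA]
        rw [abs_sub_le_iff]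
        constructor <;> linarith [hσ01.1, hσ01.2, hiA.1, hiA.2]
      · -- g x = 0, w x = -c
        have hgx : g x = 0 := hg0 hxG
        have hwc : w x = -c := by rw [hwx', hgx]; ring
        have hux : u x ≤ -(c - 1) := by
          rw [hwc] at hwx; obtain ⟨ha, hb⟩ := abs_lt.1 hwx; linarith
        have hσu : σ (u x) ≤ σ (-(c - 1)) := hσm.monotone hux
        have hσneg : σ (-(c - 1)) = 1 - σ (c - 1) := by
          have := hσsym (c - 1); linarith
        have hxA : x ∉ A := fun hxA => hxG (hAG hxA)
        have hiA : A.indicator (fun _ => (1:ℝ)) x = 0 := Set.indicator_of_notMem hxA _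
        have hiGF : (G \ F).indicator (fun _ => (1:ℝ)) x = 0 :=
          Set.indicator_of_notMem (fun hx => hxG hx.1) _
        rw [hiA, hiGF, sub_zero, abs_of_nonneg hσ01.1.le]
        linarith
  -- apply integral_close for P and Q
  have hcloseP := integral_close P hB' hum hA hGF hbd
  have hcloseQ := integral_close Q hB' hum hA hGF hbd
  -- bound the measures of G \ F
  have hGFsub : G \ F ⊆ (G \ A) ∪ (A \ F) := by
    rintro x ⟨hxG, hxF⟩
    by_cases hxA : x ∈ A
    · exact Or.inr ⟨hxA, hxF⟩
    · exact Or.inl ⟨hxG, hxA⟩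
  have hμGF : μ (G \ F) ≤ ENNReal.ofReal (ε/8) + ENNReal.ofReal (ε/8) := by
    calc μ (G \ F) ≤ μ ((G \ A) ∪ (A \ F)) := measure_mono hGFsub
    _ ≤ μ (G \ A) + μ (A \ F) := measure_union_le _ _
    _ ≤ _ := add_le_add hμGA.le hμAF.le
  have hPQle : ∀ ν : Measure X, ν ≤ μ → (ν (G \ F)).toReal ≤ ε/4 := by
    intro ν hν
    have h1 : ν (G \ F) ≤ ENNReal.ofReal (ε/4) := by
      calc ν (G \ F) ≤ μ (G \ F) := hν _
      _ ≤ ENNReal.ofReal (ε/8) + ENNReal.ofReal (ε/8) := hμGF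
      _ = ENNReal.ofReal (ε/4) := by rw [← ENNReal.ofReal_add (by linarith) (by linarith)]; congr 1; ring
    calc (ν (G \ F)).toReal ≤ (ENNReal.ofReal (ε/4)).toReal :=
          ENNReal.toReal_mono (by simp) h1
    _ = ε/4 := ENNReal.toReal_ofReal (by linarith)
  have hPle : (P (G \ F)).toReal ≤ ε/4 :=
    hPQle P (by rw [hμ]; exact Measure.le_add_right le_rfl)
  have hQle : (Q (G \ F)).toReal ≤ ε/4 :=
    hPQle Q (by rw [hμ]; exact Measure.le_add_left le_rfl)
  refine ⟨h, ?_⟩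
  have habs : |(P A).toReal - (Q A).toReal| ≤
      |(P A).toReal - ∫ x, σ (u x) ∂P| + (|∫ x, σ (u x) ∂P - ∫ x, σ (u x) ∂Q| +
        |∫ x, σ (u x) ∂Q - (Q A).toReal|) := by
    refine (abs_sub_le ((P A).toReal) (∫ x, σ (u x) ∂P) ((Q A).toReal)).trans ?_
    gcongr
    exact abs_sub_le _ _ _
  have eP : |(P A).toReal - ∫ x, σ (u x) ∂P| = |∫ x, σ (u x) ∂P - (P A).toReal| :=
    abs_sub_comm _ _
  have hfin : |(P A).toReal - (Q A).toReal| - ε < |∫ x, σ (u x) ∂P - ∫ x, σ (u x) ∂Q| := by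
    have h1 : 1 - σ (c - 1) < ε/8 := by linarith
    linarith
  simpa [sub_zero] using hfin

end Main

/-- on a Polish space, for a universal RKHS `H` (given via its feature map
`φ`, so that the functions of `H` are `x ↦ ⟪h, φ x⟫`) and `σ` satisfying Assumption (B),
the STV distance over all of `H` equals the TV distance, and the STV distance over the
balls `H_U` converges to the TV distance as `U → ∞`. -/
theorem stv_universal_rkhs_eq_tv {X : Type*} [TopologicalSpace X] [PolishSpace X]
    [MeasurableSpace X] [BorelSpace X]
    {H : Type*} [NormedAddCommGroup H] [InnerProductSpace ℝ H]
    (φ : X → H) (hφ : Continuous φ)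
    (huniv : ∀ (g : BoundedContinuousFunction X ℝ) (η : ℝ), 0 < η →
      ∃ h : H, ∀ x, |g x - evalH φ h x| < η)
    (σ : ℝ → ℝ) (hB : AssumptionB σ)
    (P Q : Measure X) [IsProbabilityMeasure P] [IsProbabilityMeasure Q] :
    STV (Set.range (evalH φ)) σ P Q = TV P Q ∧
      Tendsto (fun U : ℝ => STV (ballFuns φ U) σ P Q) atTop (nhds (TV P Q)) := by
  have hmeas_range : ∀ f ∈ Set.range (evalH φ), Measurable f := by
    rintro _ ⟨h, rfl⟩
    exact (Continuous.inner (𝕜 := ℝ) continuous_const hφ).measurable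
  have hmeas_ball : ∀ U : ℝ, ∀ f ∈ ballFuns φ U, Measurable f := by
    rintro U _ ⟨h, -, rfl⟩
    exact (Continuous.inner (𝕜 := ℝ) continuous_const hφ).measurable
  -- part 1
  have h1 : STV (Set.range (evalH φ)) σ P Q = TV P Q := by
    refine le_antisymm (STV_le_TV P Q hmeas_range hB) ?_
    refine Real.iSup_le (fun A => ?_) ?_
    · refine le_of_forall_pos_le_add fun ε hε => ?_
      obtain ⟨h, hh⟩ := exists_approx φ hφ huniv hB P Q A.2 hε
      have hle : |∫ x, σ (evalH φ h x - 0) ∂P - ∫ x, σ (evalH φ h x - 0) ∂Q|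
          ≤ STV (Set.range (evalH φ)) σ P Q :=
        le_ciSup (STV_bddAbove P Q hmeas_range hB)
          ((⟨evalH φ h, ⟨h, rfl⟩⟩, (0:ℝ)) : (Set.range (evalH φ)) × ℝ)
      linarith
    · -- 0 ≤ STV
      exact Real.iSup_nonneg fun _ => abs_nonneg _
  refine ⟨h1, ?_⟩
  -- part 2
  rw [Metric.tendsto_atTop]
  intro ε hε
  -- find a near-optimal set A
  have hTV : TV P Q - ε/2 < TV P Q := by linarith
  obtain ⟨A, hA⟩ : ∃ A : {A : Set X // MeasurableSet A},
      TV P Q - ε/2 < |(P A.1).toReal - (Q A.1).toReal| :=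
    exists_lt_of_lt_ciSup hTV
  obtain ⟨h, hh⟩ := exists_approx φ hφ huniv hB P Q A.2 (half_pos hε)
  refine ⟨‖h‖, fun U hU => ?_⟩
  have hmem : evalH φ h ∈ ballFuns φ U := ⟨h, hU, rfl⟩
  have hle : |∫ x, σ (evalH φ h x - 0) ∂P - ∫ x, σ (evalH φ h x - 0) ∂Q|
      ≤ STV (ballFuns φ U) σ P Q :=
    le_ciSup (STV_bddAbove P Q (hmeas_ball U) hB)
      ((⟨evalH φ h, hmem⟩, (0:ℝ)) : (ballFuns φ U) × ℝ)
  have hub : STV (ballFuns φ U) σ P Q ≤ TV P Q := STV_le_TV P Q (hmeas_ball U) hB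
  have hlb : TV P Q - ε < STV (ballFuns φ U) σ P Q := by linarith
  rw [Real.dist_eq, abs_sub_lt_iff]
  constructor <;> linarith
end

section
/- Suppose 𝒰 satisfies Assumption (A), σ satisfies Assumption (B), and λ is a decay rate of σ with constant C₀ > 0. Let μ be a Borel measure on X and let P, Q be Borel probability measures absolutely continuous with respect to μ with μ-a.e. strictly positive densities p, q. Suppose there exist u ∈ 𝒰 and β ∈ ℝ such that log(p(x)/q(x)) = u(x) + β for μ-almost every x. Then for every c > C₀, 0 ≤ TV(P,Q) − STV_{c𝒰,σ}(P,Q) ≤ λ(c)·(1 − TV(P,Q)), where c𝒰 := {c·u : u ∈ 𝒰}. -/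
open MeasureTheory Filter
open scoped ENNReal NNReal

/-- quantitative gap between the TV distance and the STV distance with the
scaled function class `c𝒰`, in terms of a decay rate `lam` of `σ`. -/
theorem tv_sub_stv_le_decay {X : Type*} [MeasurableSpace X] (μ : Measure X)
    (𝒰 : Set (X → ℝ)) (h𝒰0 : (fun _ => (0 : ℝ)) ∈ 𝒰) (h𝒰m : ∀ u ∈ 𝒰, Measurable u)
    (hA : ∀ u ∈ 𝒰, (fun x => -u x) ∈ 𝒰)
    (σ : ℝ → ℝ) (hB : AssumptionB σ)
    (C₀ : ℝ) (hC₀ : 0 < C₀) (lam : ℝ → ℝ) (hlam : DecayRate σ C₀ lam)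
    (p q : X → ℝ) (hpm : Measurable p) (hqm : Measurable q)
    (hp : ∀ᵐ x ∂μ, 0 < p x) (hq : ∀ᵐ x ∂μ, 0 < q x)
    (P Q : Measure X)
    (hP : P = μ.withDensity fun x => ENNReal.ofReal (p x))
    (hQ : Q = μ.withDensity fun x => ENNReal.ofReal (q x))
    [IsProbabilityMeasure P] [IsProbabilityMeasure Q]
    (hlog : ∃ u ∈ 𝒰, ∃ β : ℝ, ∀ᵐ x ∂μ, Real.log (p x / q x) = u x + β)
    (c : ℝ) (hc : C₀ < c) :
    0 ≤ TV P Q - STV ((fun u => fun x => c * u x) '' 𝒰) σ P Q ∧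
      TV P Q - STV ((fun u => fun x => c * u x) '' 𝒰) σ P Q ≤ lam c * (1 - TV P Q) := by

  classical
  obtain ⟨hσc, hσm, hσbot, hσtop, hσsym⟩ := hB
  -- σ takes values in (0,1)
  have hσ01 : ∀ z, 0 < σ z ∧ σ z < 1 := by
    intro z
    constructor
    · have h1 : σ (z - 1) < σ z := hσm (by linarith)
      have h2 : (0 : ℝ) ≤ σ (z - 1) := by
        refine le_of_tendsto hσbot ?_
        filter_upwards [eventually_le_atBot (z - 1)] with w hw
        exact hσm.monotone hw
      linarith
    · have h1 : σ z < σ (z + 1) := hσm (by linarith)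
      have h2 : σ (z + 1) ≤ 1 := by
        refine ge_of_tendsto hσtop ?_
        filter_upwards [eventually_ge_atTop (z + 1)] with w hw
        exact hσm.monotone hw
      linarith
  have hlam0 : 0 ≤ lam c := by
    have := hlam.2 c hc 1 le_rfl
    simpa using this
  set A₀ : Set X := {x | q x ≤ p x} with hA₀def
  have hA₀m : MeasurableSet A₀ := measurableSet_le hqm hpm
  have hp0 : 0 ≤ᵐ[μ] p := hp.mono fun x hx => hx.le
  have hq0 : 0 ≤ᵐ[μ] q := hq.mono fun x hx => hx.le
  -- total mass computations
  have hlint_p : ∫⁻ x, ENNReal.ofReal (p x) ∂μ = 1 := by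
    have h1 : P Set.univ = 1 := measure_univ
    rw [hP, withDensity_apply _ MeasurableSet.univ, Measure.restrict_univ] at h1
    exact h1
  have hlint_q : ∫⁻ x, ENNReal.ofReal (q x) ∂μ = 1 := by
    have h1 : Q Set.univ = 1 := measure_univ
    rw [hQ, withDensity_apply _ MeasurableSet.univ, Measure.restrict_univ] at h1
    exact h1
  have hip : Integrable p μ := by
    refine ⟨hpm.aestronglyMeasurable, ?_⟩
    rw [hasFiniteIntegral_iff_ofReal hp0, hlint_p]
    exact ENNReal.one_lt_top
  have hiq : Integrable q μ := by
    refine ⟨hqm.aestronglyMeasurable, ?_⟩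
    rw [hasFiniteIntegral_iff_ofReal hq0, hlint_q]
    exact ENNReal.one_lt_top
  have hPB : ∀ B : Set X, MeasurableSet B → (P B).toReal = ∫ x in B, p x ∂μ := by
    intro B hB
    rw [hP, withDensity_apply _ hB,
      ← ofReal_integral_eq_lintegral_ofReal hip.restrict (ae_restrict_of_ae hp0),
      ENNReal.toReal_ofReal (integral_nonneg_of_ae (ae_restrict_of_ae hp0))]
  have hQB : ∀ B : Set X, MeasurableSet B → (Q B).toReal = ∫ x in B, q x ∂μ := by
    intro B hB
    rw [hQ, withDensity_apply _ hB,
      ← ofReal_integral_eq_lintegral_ofReal hiq.restrict (ae_restrict_of_ae hq0),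
      ENNReal.toReal_ofReal (integral_nonneg_of_ae (ae_restrict_of_ae hq0))]
  have hp1 : ∫ x, p x ∂μ = 1 := by
    have := hPB Set.univ MeasurableSet.univ
    rw [setIntegral_univ] at this
    simp only [measure_univ, ENNReal.toReal_one] at this
    linarith
  have hq1 : ∫ x, q x ∂μ = 1 := by
    have := hQB Set.univ MeasurableSet.univ
    rw [setIntegral_univ] at this
    simp only [measure_univ, ENNReal.toReal_one] at this
    linarith
  set TVval : ℝ := ∫ x in A₀, p x ∂μ - ∫ x in A₀, q x ∂μ with hTVval
  have hpq : Integrable (fun x => p x - q x) μ := hip.sub hiq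
  have hindAint : Integrable (A₀.indicator fun x => p x - q x) μ := hpq.indicator hA₀m
  have hindA : ∫ x, A₀.indicator (fun x => p x - q x) x ∂μ = TVval := by
    rw [integral_indicator hA₀m, integral_sub hip.integrableOn hiq.integrableOn]
  have hcompl_p : ∫ x in A₀ᶜ, p x ∂μ = 1 - ∫ x in A₀, p x ∂μ := by
    have := integral_add_compl hA₀m hip
    rw [hp1] at this; linarith
  have hcompl_q : ∫ x in A₀ᶜ, q x ∂μ = 1 - ∫ x in A₀, q x ∂μ := by
    have := integral_add_compl hA₀m hiq
    rw [hq1] at this; linarith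
  -- key estimate: ∫ f·(p-q) ≤ TVval for 0 ≤ f ≤ 1
  have hkey : ∀ f : X → ℝ, Measurable f → (∀ x, 0 ≤ f x) → (∀ x, f x ≤ 1) →
      |∫ x, (p x - q x) * f x ∂μ| ≤ TVval := by
    intro f hfm hf0 hf1
    have hifp : Integrable (fun x => (p x - q x) * f x) μ := by
      refine Integrable.mono' (hip.add hiq) ((hpm.sub hqm).mul hfm).aestronglyMeasurable ?_
      filter_upwards [hp, hq] with x hxp' hxq'
      have hxp := hxp'.le; have hxq := hxq'.le
      rw [Real.norm_eq_abs, abs_mul]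
      calc |p x - q x| * |f x| ≤ |p x - q x| * 1 := by
            exact mul_le_mul_of_nonneg_left (by rw [abs_le]; constructor <;> [linarith [hf0 x]; exact hf1 x]) (abs_nonneg _)
        _ = |p x - q x| := mul_one _
        _ ≤ p x + q x := by rw [abs_le]; constructor <;> linarith
    rw [abs_le]
    constructor
    · -- -(TVval) ≤ ∫, i.e. ∫ (q-p) f ≤ TVval; use indicator of A₀ᶜ
      have hle : ∀ᵐ x ∂μ, (q x - p x) * f x ≤ A₀ᶜ.indicator (fun x => q x - p x) x := by
        filter_upwards with x
        by_cases hx : x ∈ A₀ᶜ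
        · rw [Set.indicator_of_mem hx]
          have hx' : p x < q x := by simpa [hA₀def] using hx
          nlinarith [hf0 x, hf1 x]
        · rw [Set.indicator_of_notMem hx]
          have hx' : q x ≤ p x := by simpa [hA₀def] using hx
          nlinarith [hf0 x, hf1 x]
      have h2 : ∫ x, (q x - p x) * f x ∂μ ≤ ∫ x, A₀ᶜ.indicator (fun x => q x - p x) x ∂μ := by
        refine integral_mono_ae (hifp.neg.congr (Filter.Eventually.of_forall fun x => by simp only [Pi.neg_apply]; ring)) (((hiq.sub hip)).indicator hA₀m.compl) hle
      have h3 : ∫ x, A₀ᶜ.indicator (fun x => q x - p x) x ∂μ = TVval := by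
        rw [integral_indicator hA₀m.compl, integral_sub hiq.integrableOn hip.integrableOn,
          hcompl_p, hcompl_q]
        ring
      have h4 : ∫ x, (q x - p x) * f x ∂μ = - ∫ x, (p x - q x) * f x ∂μ := by
        rw [← integral_neg]
        congr 1; funext x; ring
      linarith [h2, h3, h4.symm.le, h4.le]
    · have hle : ∀ᵐ x ∂μ, (p x - q x) * f x ≤ A₀.indicator (fun x => p x - q x) x := by
        filter_upwards with x
        by_cases hx : x ∈ A₀
        · rw [Set.indicator_of_mem hx]
          have hx' : q x ≤ p x := hx
          nlinarith [hf0 x, hf1 x]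
        · rw [Set.indicator_of_notMem hx]
          have hx' : p x < q x := by simpa [hA₀def] using hx
          nlinarith [hf0 x, hf1 x]
      have h2 := integral_mono_ae hifp hindAint hle
      linarith [hindA ▸ h2]
  -- integrals over P, Q of measurable bounded functions
  have hintP : ∀ f : X → ℝ, Measurable f → (∀ x, 0 ≤ f x) → (∀ x, f x ≤ 1) →
      ∫ x, f x ∂P = ∫ x, p x * f x ∂μ := by
    intro f hfm _ _
    rw [hP]
    have heq : (fun x => ENNReal.ofReal (p x)) = (fun x => ((p x).toNNReal : ℝ≥0∞)) := rfl
    rw [heq, integral_withDensity_eq_integral_smul hpm.real_toNNReal f]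
    refine integral_congr_ae (hp.mono fun x hx => ?_)
    simp [NNReal.smul_def, Real.coe_toNNReal _ hx.le]
  have hintQ : ∀ f : X → ℝ, Measurable f → (∀ x, 0 ≤ f x) → (∀ x, f x ≤ 1) →
      ∫ x, f x ∂Q = ∫ x, q x * f x ∂μ := by
    intro f hfm _ _
    rw [hQ]
    have heq : (fun x => ENNReal.ofReal (q x)) = (fun x => ((q x).toNNReal : ℝ≥0∞)) := rfl
    rw [heq, integral_withDensity_eq_integral_smul hqm.real_toNNReal f]
    refine integral_congr_ae (hq.mono fun x hx => ?_)
    simp [NNReal.smul_def, Real.coe_toNNReal _ hx.le]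
  have hdiff : ∀ f : X → ℝ, Measurable f → (∀ x, 0 ≤ f x) → (∀ x, f x ≤ 1) →
      ∫ x, f x ∂P - ∫ x, f x ∂Q = ∫ x, (p x - q x) * f x ∂μ := by
    intro f hfm hf0 hf1
    have hipf : Integrable (fun x => p x * f x) μ := by
      refine Integrable.mono' hip (hpm.mul hfm).aestronglyMeasurable ?_
      filter_upwards [hp] with x hx'
      have hx := hx'.le
      rw [Real.norm_eq_abs, abs_mul, abs_of_nonneg hx, abs_of_nonneg (hf0 x)]
      nlinarith [hf1 x]
    have hiqf : Integrable (fun x => q x * f x) μ := by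
      refine Integrable.mono' hiq (hqm.mul hfm).aestronglyMeasurable ?_
      filter_upwards [hq] with x hx'
      have hx := hx'.le
      rw [Real.norm_eq_abs, abs_mul, abs_of_nonneg hx, abs_of_nonneg (hf0 x)]
      nlinarith [hf1 x]
    rw [hintP f hfm hf0 hf1, hintQ f hfm hf0 hf1, ← integral_sub hipf hiqf]
    congr 1; funext x; ring
  -- bound for TV over arbitrary measurable sets
  have hbound : ∀ B : Set X, MeasurableSet B → |(P B).toReal - (Q B).toReal| ≤ TVval := by
    intro B hB
    have hstep : ∀ x, (0:ℝ) ≤ B.indicator (fun _ => (1:ℝ)) x ∧ B.indicator (fun _ => (1:ℝ)) x ≤ 1 := by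
      intro x; by_cases hx : x ∈ B <;> simp [hx]
    have hmeas : Measurable (B.indicator fun _ => (1:ℝ)) := measurable_const.indicator hB
    have := hkey _ hmeas (fun x => (hstep x).1) (fun x => (hstep x).2)
    have heqi : ∫ x, (p x - q x) * B.indicator (fun _ => (1:ℝ)) x ∂μ
        = (P B).toReal - (Q B).toReal := by
      rw [hPB B hB, hQB B hB, ← integral_sub hip.integrableOn hiq.integrableOn,
        ← integral_indicator hB]
      refine integral_congr_ae (Filter.Eventually.of_forall fun x => ?_)
      by_cases hx : x ∈ B <;> simp [hx]
    rw [heqi] at this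
    exact this
  have hTVnn : 0 ≤ TVval := by
    have := setIntegral_mono_on hiq.integrableOn hip.integrableOn hA₀m (fun x hx => hx)
    linarith
  have hTVeq : TV P Q = TVval := by
    have hbdd : BddAbove (Set.range fun A : {A : Set X // MeasurableSet A} =>
        |(P A.1).toReal - (Q A.1).toReal|) := by
      refine ⟨TVval, ?_⟩
      rintro y ⟨A, rfl⟩
      exact hbound A.1 A.2
    refine le_antisymm (ciSup_le fun A => hbound A.1 A.2) ?_
    have h1 := le_ciSup hbdd (⟨A₀, hA₀m⟩ : {A : Set X // MeasurableSet A})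
    have h2 : TVval ≤ |(P A₀).toReal - (Q A₀).toReal| := by
      rw [hPB A₀ hA₀m, hQB A₀ hA₀m]
      exact le_abs_self _
    exact le_trans h2 h1
  -- STV facts
  set 𝒱 : Set (X → ℝ) := (fun u => fun x => c * u x) '' 𝒰 with h𝒱
  have hSTVub : ∀ ub : 𝒱 × ℝ,
      |∫ x, σ (ub.1.1 x - ub.2) ∂P - ∫ x, σ (ub.1.1 x - ub.2) ∂Q| ≤ TVval := by
    rintro ⟨⟨v, hv⟩, b⟩
    obtain ⟨u, hu, rfl⟩ := hv
    have hfm : Measurable (fun x => σ (c * u x - b)) :=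
      hσc.measurable.comp (((h𝒰m u hu).const_mul c).sub measurable_const)
    have h := hkey _ hfm (fun x => (hσ01 _).1.le) (fun x => (hσ01 _).2.le)
    rw [← hdiff _ hfm (fun x => (hσ01 _).1.le) (fun x => (hσ01 _).2.le)] at h
    exact h
  haveI : Nonempty (𝒱 × ℝ) := ⟨⟨⟨fun x => c * 0, ⟨(fun _ => (0:ℝ)), h𝒰0, rfl⟩⟩, 0⟩⟩
  have hSTVbdd : BddAbove (Set.range fun ub : 𝒱 × ℝ =>
      |∫ x, σ (ub.1.1 x - ub.2) ∂P - ∫ x, σ (ub.1.1 x - ub.2) ∂Q|) := by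
    refine ⟨TVval, ?_⟩
    rintro y ⟨ub, rfl⟩
    exact hSTVub ub
  have hSTVle : STV 𝒱 σ P Q ≤ TVval := ciSup_le hSTVub
  -- part 2 : lower bound on STV
  obtain ⟨u, hu, β, hlog'⟩ := hlog
  have hum := h𝒰m u hu
  set v : X → ℝ := fun x => c * u x with hv
  have hvmem : v ∈ 𝒱 := ⟨u, hu, rfl⟩
  set b : ℝ := -(c * β) with hb
  set f : X → ℝ := fun x => σ (v x - b) with hf
  have hfm : Measurable f := hσc.measurable.comp ((hum.const_mul c).sub measurable_const)
  have hf0 : ∀ x, 0 ≤ f x := fun x => (hσ01 _).1.le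
  have hf1 : ∀ x, f x ≤ 1 := fun x => (hσ01 _).2.le
  set S : ℝ := ∫ x, f x ∂P - ∫ x, f x ∂Q with hS
  have hSle : S ≤ STV 𝒱 σ P Q := by
    have h1 := le_ciSup hSTVbdd ((⟨⟨v, hvmem⟩, b⟩ : 𝒱 × ℝ))
    exact le_trans (le_abs_self _) h1
  have hSeq : S = ∫ x, (p x - q x) * f x ∂μ := hdiff f hfm hf0 hf1
  -- pointwise bound
  have hfint : Integrable (fun x => (p x - q x) * f x) μ := by
    refine Integrable.mono' (hip.add hiq) ((hpm.sub hqm).mul hfm).aestronglyMeasurable ?_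
    filter_upwards [hp, hq] with x hxp' hxq'
    have hxp := hxp'.le; have hxq := hxq'.le
    rw [Real.norm_eq_abs, abs_mul]
    calc |p x - q x| * |f x| ≤ |p x - q x| * 1 := by
          exact mul_le_mul_of_nonneg_left (by rw [abs_le]; constructor <;> [linarith [hf0 x]; exact hf1 x]) (abs_nonneg _)
      _ = |p x - q x| := mul_one _
      _ ≤ p x + q x := by rw [abs_le]; constructor <;> linarith
  have hMint : Integrable (fun x => lam c * (A₀.indicator q x + A₀ᶜ.indicator p x)) μ :=
    (((hiq.indicator hA₀m).add (hip.indicator hA₀m.compl)).const_mul _)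
  have hptwise : ∀ᵐ x ∂μ, A₀.indicator (fun x => p x - q x) x - (p x - q x) * f x
      ≤ lam c * (A₀.indicator q x + A₀ᶜ.indicator p x) := by
    filter_upwards [hp, hq, hlog'] with x hxp hxq hxl
    have hfx : f x = σ (c * Real.log (p x / q x)) := by
      simp only [hf, hv, hb, hxl]
      ring_nf
    by_cases hx : x ∈ A₀
    · have hx' : q x ≤ p x := hx
      rw [Set.indicator_of_mem hx, Set.indicator_of_mem hx,
        Set.indicator_of_notMem (by simpa using hx : x ∉ A₀ᶜ)]
      set t : ℝ := p x / q x with ht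
      have ht1 : 1 ≤ t := (one_le_div hxq).mpr hx'
      have hdecay := hlam.2 c hc t ht1
      have hsym : σ (c * Real.log t) = 1 - σ (-(c * Real.log t)) := by
        have := hσsym (c * Real.log t); linarith
      have hpt : p x - q x = q x * (t - 1) := by
        rw [ht, mul_sub, mul_one, mul_div_assoc', mul_div_cancel_left₀ _ hxq.ne']
      have key : (p x - q x) * σ (-(c * Real.log t)) ≤ q x * lam c := by
        rw [hpt]
        calc q x * (t - 1) * σ (-(c * Real.log t))
            = q x * (σ (-(c * Real.log t)) * (t - 1)) := by ring
          _ ≤ q x * lam c := mul_le_mul_of_nonneg_left hdecay hxq.le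
      rw [hfx]
      nlinarith [key, hsym]
    · have hx' : p x < q x := by simpa [hA₀def] using hx
      rw [Set.indicator_of_notMem hx, Set.indicator_of_notMem hx,
        Set.indicator_of_mem (by simpa using hx : x ∈ A₀ᶜ)]
      set t : ℝ := q x / p x with ht
      have ht1 : 1 ≤ t := (one_le_div hxp).mpr hx'.le
      have hdecay := hlam.2 c hc t ht1
      have hlogeq : Real.log (p x / q x) = -Real.log t := by
        rw [ht, ← Real.log_inv]
        congr 1
        field_simp
      have hqt : q x - p x = p x * (t - 1) := by
        rw [ht, mul_sub, mul_one, mul_div_assoc', mul_div_cancel_left₀ _ hxp.ne']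
      have key : (q x - p x) * σ (-(c * Real.log t)) ≤ p x * lam c := by
        rw [hqt]
        calc p x * (t - 1) * σ (-(c * Real.log t))
            = p x * (σ (-(c * Real.log t)) * (t - 1)) := by ring
          _ ≤ p x * lam c := mul_le_mul_of_nonneg_left hdecay hxp.le
      rw [hfx, hlogeq]
      have hz : c * -Real.log t = -(c * Real.log t) := by ring
      rw [hz]
      nlinarith [key]
  have hmain : TVval - S ≤ lam c * (1 - TVval) := by
    have h1 : TVval - S = ∫ x, (A₀.indicator (fun x => p x - q x) x - (p x - q x) * f x) ∂μ := by
      rw [integral_sub hindAint hfint, hindA, hSeq]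
    have h2 := integral_mono_ae (hindAint.sub hfint) hMint hptwise
    have h3 : ∫ x, lam c * (A₀.indicator q x + A₀ᶜ.indicator p x) ∂μ = lam c * (1 - TVval) := by
      rw [integral_const_mul, integral_add (hiq.indicator hA₀m) (hip.indicator hA₀m.compl),
        integral_indicator hA₀m, integral_indicator hA₀m.compl, hcompl_p, hTVval]
      ring
    rw [h1]
    rw [h3] at h2
    exact h2
  constructor
  · rw [hTVeq]; linarith
  · rw [hTVeq]; linarith [hSle, hmain]
end

section
/- Let σ satisfy Assumption (B) and let λ be a decay rate of σ (with constant C₀ > 0). Then liminf_{c→∞} c·λ(c) > 0; in particular the decay rate of any such σ cannot be of order smaller than 1/c. -/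
open MeasureTheory Filter
open scoped ENNReal NNReal

/-- for any `σ` satisfying Assumption (B) with decay rate `lam`, we have
`liminf_{c→∞} c·lam(c) > 0`, expressed as: there is `a > 0` with `a ≤ c·lam(c)` for all
sufficiently large `c`; so the decay rate cannot be of order smaller than `1/c`. -/
theorem decay_rate_liminf_pos (σ : ℝ → ℝ) (hB : AssumptionB σ)
    (C₀ : ℝ) (hC₀ : 0 < C₀) (lam : ℝ → ℝ) (hlam : DecayRate σ C₀ lam) :
    ∃ a : ℝ, 0 < a ∧ ∀ᶠ c in atTop, a ≤ c * lam c := by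
  obtain ⟨hcont, hmono, hbot, htop, hsym⟩ := hB
  have h2 : 0 ≤ σ (-2) := by
    exact le_of_tendsto hbot
      ((eventually_le_atBot (-2 : ℝ)).mono fun z hz => hmono.monotone hz)
  have hpos : 0 < σ (-1) := lt_of_le_of_lt h2 (hmono (by norm_num))
  refine ⟨σ (-1), hpos, ?_⟩
  filter_upwards [eventually_gt_atTop C₀, eventually_gt_atTop 0] with c hc hc0
  have ht : (1 : ℝ) ≤ Real.exp (1 / c) :=
    Real.one_le_exp (by positivity)
  have key := hlam.2 c hc (Real.exp (1 / c)) ht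
  rw [Real.log_exp] at key
  have hone : c * (1 / c) = 1 := by field_simp
  rw [hone] at key
  have hexp : 1 / c ≤ Real.exp (1 / c) - 1 := by
    have := Real.add_one_le_exp (1 / c)
    linarith
  have h1 : σ (-1) * (1 / c) ≤ σ (-1) * (Real.exp (1 / c) - 1) :=
    mul_le_mul_of_nonneg_left hexp hpos.le
  have h2' : σ (-1) * (1 / c) ≤ lam c := le_trans h1 key
  calc σ (-1) = c * (σ (-1) * (1 / c)) := by field_simp
    _ ≤ c * lam c := mul_le_mul_of_nonneg_left h2' hc0.le
end

section
/- Let σ(z) = 1/(1+e^{−z}) be the sigmoid function. Then for every real c > 1 and every t ≥ 1, σ(−c·log t)·(t−1) = (t−1)/(1+t^c) ≤ 1/c. Consequently λ(c) = 1/c, c > 1, is a decay rate of the sigmoid function. -/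
open MeasureTheory Filter
open scoped ENNReal NNReal

/-- for the sigmoid function, `σ(-c log t)·(t-1) = (t-1)/(1+t^c) ≤ 1/c` for
all `c > 1` and `t ≥ 1`; consequently `λ(c) = 1/c` is a decay rate of the sigmoid. -/
theorem sigmoid_decay_rate :
    (∀ c : ℝ, 1 < c → ∀ t : ℝ, 1 ≤ t →
      sigmoid (-(c * Real.log t)) * (t - 1) = (t - 1) / (1 + t ^ c) ∧
        sigmoid (-(c * Real.log t)) * (t - 1) ≤ 1 / c) ∧
      DecayRate sigmoid 1 (fun c => 1 / c) := by
  have key : ∀ c : ℝ, 1 < c → ∀ t : ℝ, 1 ≤ t →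
      sigmoid (-(c * Real.log t)) * (t - 1) = (t - 1) / (1 + t ^ c) ∧
        sigmoid (-(c * Real.log t)) * (t - 1) ≤ 1 / c := by
    intro c hc t ht
    have ht0 : (0:ℝ) < t := lt_of_lt_of_le one_pos ht
    have hrp : t ^ c = Real.exp (c * Real.log t) := by
      rw [Real.rpow_def_of_pos ht0, mul_comm]
    have hpos : (0:ℝ) < 1 + t ^ c := by positivity
    have heq : sigmoid (-(c * Real.log t)) * (t - 1) = (t - 1) / (1 + t ^ c) := by
      simp only [sigmoid, neg_neg, hrp]
      ring
    refine ⟨heq, ?_⟩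
    rw [heq, div_le_div_iff₀ hpos (lt_trans one_pos hc)]
    have hb : 1 + c * (t - 1) ≤ (1 + (t - 1)) ^ c :=
      one_add_mul_self_le_rpow_one_add (by linarith) hc.le
    have h1 : (1 + (t-1) : ℝ) = t := by ring
    rw [h1] at hb
    nlinarith
  refine ⟨key, ?_, fun c hc t ht => (key c hc t ht).2⟩
  simpa [one_div] using tendsto_inv_atTop_zero
end

section
/- Let H be an RKHS of real-valued functions on X with kernel k, μ a Borel measure on X, and f, g ∈ H with ∫ e^{f} dμ < ∞ and ∫ e^{g} dμ < ∞, defining P_f, P_g in the kernel exponential family. Then for every U > 0, STV_{H_U,𝟙}(P_f, P_g) = TV(P_f, P_g). -/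
open MeasureTheory Filter
open scoped ENNReal NNReal

section AuxProof

variable {X : Type*} [MeasurableSpace X] {H : Type*} [NormedAddCommGroup H]
  [InnerProductSpace ℝ H] (φ : X → H) (μ : MeasureTheory.Measure X)

open MeasureTheory

lemma integrable_pexp_density (f : H)
    (hf : Integrable (fun x => Real.exp (evalH φ f x)) μ) :
    Integrable (fun x => Real.exp (evalH φ f x - logPartition μ φ f)) μ := by
  simp only [Real.exp_sub]; exact hf.div_const _

lemma integral_pexp_density (hμ : μ ≠ 0) (f : H)
    (hf : Integrable (fun x => Real.exp (evalH φ f x)) μ) :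
    ∫ x, Real.exp (evalH φ f x - logPartition μ φ f) ∂μ = 1 := by
  have hIpos : 0 < ∫ x, Real.exp (evalH φ f x) ∂μ := by
    rw [integral_pos_iff_support_of_nonneg (fun x => (Real.exp_pos _).le) hf]
    have hsupp : Function.support (fun x => Real.exp (evalH φ f x)) = Set.univ := by
      ext x; simp [Function.support, Real.exp_ne_zero]
    rw [hsupp]
    exact MeasureTheory.Measure.measure_univ_pos.mpr hμ
  simp only [Real.exp_sub]
  rw [integral_div, logPartition, Real.exp_log hIpos, div_self hIpos.ne']

lemma pexp_apply_toReal (f : H)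
    (hf : Integrable (fun x => Real.exp (evalH φ f x)) μ)
    {A : Set X} (hA : MeasurableSet A) :
    ((Pexp μ φ f) A).toReal = ∫ x in A, Real.exp (evalH φ f x - logPartition μ φ f) ∂μ := by
  rw [Pexp, withDensity_apply _ hA,
    ← ofReal_integral_eq_lintegral_ofReal ((integrable_pexp_density φ μ f hf).integrableOn)
      (Filter.Eventually.of_forall fun x => (Real.exp_pos _).le),
    ENNReal.toReal_ofReal (setIntegral_nonneg hA fun x _ => (Real.exp_pos _).le)]

lemma isProbabilityMeasure_pexp (hμ : μ ≠ 0) (f : H)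
    (hf : Integrable (fun x => Real.exp (evalH φ f x)) μ) :
    IsProbabilityMeasure (Pexp μ φ f) := by
  constructor
  rw [Pexp, withDensity_apply _ MeasurableSet.univ, Measure.restrict_univ,
    ← ofReal_integral_eq_lintegral_ofReal (integrable_pexp_density φ μ f hf)
      (Filter.Eventually.of_forall fun x => (Real.exp_pos _).le),
    integral_pexp_density φ μ hμ f hf, ENNReal.ofReal_one]

lemma integral_step (P : MeasureTheory.Measure X) [IsFiniteMeasure P]
    (u : X → ℝ) (hu : Measurable u) (b : ℝ) :
    ∫ x, stepFun (u x - b) ∂P = (P {x | b ≤ u x}).toReal := by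
  have hs : ∀ x, stepFun (u x - b) = Set.indicator {x | b ≤ u x} 1 x := by
    intro x; by_cases h : b ≤ u x <;>
      simp [stepFun, Set.indicator_apply, h, sub_nonneg, Set.mem_setOf_eq]
  simp_rw [hs]
  exact integral_indicator_one (measurableSet_le measurable_const hu)

end AuxProof

/-- for members `P_f, P_g` of the kernel exponential family of the RKHS with
feature map `φ`, the STV distance with the step function over any ball `H_U`, `U > 0`,
equals the TV distance. -/
theorem stv_step_eq_tv_kernel_exp {X : Type*} [MeasurableSpace X]
    {H : Type*} [NormedAddCommGroup H] [InnerProductSpace ℝ H]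
    (φ : X → H) (hmeas : ∀ h : H, Measurable (evalH φ h))
    (μ : Measure X) (hμ : μ ≠ 0)
    (f g : H)
    (hf : Integrable (fun x => Real.exp (evalH φ f x)) μ)
    (hg : Integrable (fun x => Real.exp (evalH φ g x)) μ)
    (U : ℝ) (hU : 0 < U) :
    STV (ballFuns φ U) stepFun (Pexp μ φ f) (Pexp μ φ g) = TV (Pexp μ φ f) (Pexp μ φ g) := by
  set Af := logPartition μ φ f with hAf
  set Ag := logPartition μ φ g with hAg
  set pf : X → ℝ := fun x => Real.exp (evalH φ f x - Af) with hpf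
  set pg : X → ℝ := fun x => Real.exp (evalH φ g x - Ag) with hpg
  have hpfi : Integrable pf μ := integrable_pexp_density φ μ f hf
  have hpgi : Integrable pg μ := integrable_pexp_density φ μ g hg
  set D : X → ℝ := fun x => pf x - pg x with hD
  have hDi : Integrable D μ := hpfi.sub hpgi
  have hDint : ∫ x, D x ∂μ = 0 := by
    simp only [hD]
    rw [integral_sub hpfi hpgi, integral_pexp_density φ μ hμ f hf,
      integral_pexp_density φ μ hμ g hg, sub_self]
  haveI hPf : IsProbabilityMeasure (Pexp μ φ f) := isProbabilityMeasure_pexp φ μ hμ f hf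
  haveI hPg : IsProbabilityMeasure (Pexp μ φ g) := isProbabilityMeasure_pexp φ μ hμ g hg
  set t : ℝ := U / (‖f - g‖ + U) with ht
  have htpos : 0 < t := div_pos hU (by positivity)
  set h0 : H := t • (f - g) with hh0
  have hnorm : ‖h0‖ ≤ U := by
    rw [hh0, norm_smul, Real.norm_eq_abs, abs_of_pos htpos, ht, div_mul_eq_mul_div,
      div_le_iff₀ (by positivity : (0:ℝ) < ‖f - g‖ + U)]
    nlinarith [norm_nonneg (f - g)]
  set bstar : ℝ := t * (Af - Ag) with hbstar
  set Astar : Set X := {x | bstar ≤ evalH φ h0 x} with hAstar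
  have hmAstar : MeasurableSet Astar := measurableSet_le measurable_const (hmeas h0)
  have hAstar_iff : ∀ x, x ∈ Astar ↔ 0 ≤ D x := by
    intro x
    have he : evalH φ h0 x = t * (evalH φ f x - evalH φ g x) := by
      simp [evalH, hh0, real_inner_smul_left, inner_sub_left]
    simp only [hAstar, Set.mem_setOf_eq, he, hbstar, mul_le_mul_iff_right₀ htpos, hD, hpf, hpg,
      sub_nonneg, Real.exp_le_exp]
    constructor <;> intro <;> linarith
  set J : ℝ := ∫ x in Astar, D x ∂μ with hJ
  have hJnn : 0 ≤ J := setIntegral_nonneg hmAstar fun x hx => (hAstar_iff x).mp hx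
  have step1 : ∀ A : Set X, MeasurableSet A → ∫ x in A, D x ∂μ ≤ J := by
    intro A hA
    have h1 : ∫ x in A, D x ∂μ = ∫ x in A ∩ Astar, D x ∂μ + ∫ x in A \ Astar, D x ∂μ :=
      (integral_inter_add_diff hmAstar hDi.integrableOn).symm
    have h2 : ∫ x in A \ Astar, D x ∂μ ≤ 0 :=
      setIntegral_nonpos (hA.diff hmAstar) fun x hx => by
        by_contra hc; push_neg at hc; exact hx.2 ((hAstar_iff x).mpr hc.le)
    have h3 : J = ∫ x in Astar ∩ A, D x ∂μ + ∫ x in Astar \ A, D x ∂μ :=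
      (integral_inter_add_diff hA hDi.integrableOn).symm
    have h4 : 0 ≤ ∫ x in Astar \ A, D x ∂μ :=
      setIntegral_nonneg (hmAstar.diff hA) fun x hx => (hAstar_iff x).mp hx.1
    rw [Set.inter_comm] at h3
    linarith
  have key : ∀ A : Set X, MeasurableSet A → |∫ x in A, D x ∂μ| ≤ J := by
    intro A hA
    rw [abs_le]
    refine ⟨?_, step1 A hA⟩
    have hc : ∫ x in A, D x ∂μ + ∫ x in Aᶜ, D x ∂μ = 0 := by
      rw [integral_add_compl hA hDi, hDint]
    linarith [step1 Aᶜ hA.compl]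
  have hTVterm : ∀ A : Set X, MeasurableSet A →
      |((Pexp μ φ f) A).toReal - ((Pexp μ φ g) A).toReal| = |∫ x in A, D x ∂μ| := by
    intro A hA
    rw [pexp_apply_toReal φ μ f hf hA, pexp_apply_toReal φ μ g hg hA,
      ← integral_sub hpfi.integrableOn hpgi.integrableOn]
  have hSTVterm : ∀ (u : X → ℝ), Measurable u → ∀ b : ℝ,
      |∫ x, stepFun (u x - b) ∂(Pexp μ φ f) - ∫ x, stepFun (u x - b) ∂(Pexp μ φ g)|
        = |∫ x in {x | b ≤ u x}, D x ∂μ| := by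
    intro u hu b
    rw [integral_step _ u hu b, integral_step _ u hu b,
      hTVterm _ (measurableSet_le measurable_const hu)]
  have hTV : TV (Pexp μ φ f) (Pexp μ φ g) = J := by
    apply le_antisymm
    · apply Real.iSup_le _ hJnn
      rintro ⟨A, hA⟩
      dsimp only
      rw [hTVterm A hA]
      exact key A hA
    · have hbdd : BddAbove (Set.range fun A : {A : Set X // MeasurableSet A} =>
          |((Pexp μ φ f) A.1).toReal - ((Pexp μ φ g) A.1).toReal|) := by
        refine ⟨J, ?_⟩
        rintro y ⟨⟨A, hA⟩, rfl⟩
        dsimp only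
        rw [hTVterm A hA]
        exact key A hA
      have hle := le_ciSup hbdd (⟨Astar, hmAstar⟩ : {A : Set X // MeasurableSet A})
      rw [TV]
      calc J = |∫ x in Astar, D x ∂μ| := (abs_of_nonneg hJnn).symm
        _ = |((Pexp μ φ f) Astar).toReal - ((Pexp μ φ g) Astar).toReal| :=
            (hTVterm Astar hmAstar).symm
        _ ≤ _ := hle
  have hmem : evalH φ h0 ∈ ballFuns φ U := ⟨h0, hnorm, rfl⟩
  have hSTV : STV (ballFuns φ U) stepFun (Pexp μ φ f) (Pexp μ φ g) = J := by
    apply le_antisymm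
    · apply Real.iSup_le _ hJnn
      rintro ⟨⟨u, hu⟩, b⟩
      obtain ⟨h, -, rfl⟩ := hu
      dsimp only
      rw [hSTVterm _ (hmeas h) b]
      exact key _ (measurableSet_le measurable_const (hmeas h))
    · have hbdd : BddAbove (Set.range fun ub : (ballFuns φ U) × ℝ =>
          |∫ x, stepFun (ub.1.1 x - ub.2) ∂(Pexp μ φ f)
            - ∫ x, stepFun (ub.1.1 x - ub.2) ∂(Pexp μ φ g)|) := by
        refine ⟨J, ?_⟩
        rintro y ⟨⟨⟨u, hu⟩, b⟩, rfl⟩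
        obtain ⟨h, -, rfl⟩ := hu
        simp only
        rw [hSTVterm _ (hmeas h) b]
        exact key _ (measurableSet_le measurable_const (hmeas h))
      have hle := le_ciSup hbdd ((⟨⟨evalH φ h0, hmem⟩, bstar⟩ : (ballFuns φ U) × ℝ))
      rw [STV]
      calc J = |∫ x in Astar, D x ∂μ| := (abs_of_nonneg hJnn).symm
        _ = |∫ x, stepFun (evalH φ h0 x - bstar) ∂(Pexp μ φ f)
              - ∫ x, stepFun (evalH φ h0 x - bstar) ∂(Pexp μ φ g)| :=
            (hSTVterm _ (hmeas h0) bstar).symm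
        _ ≤ _ := hle
  rw [hSTV, hTV]
end

section
/- Suppose σ satisfies Assumption (B) with decay rate λ (with constant C₀ > 0). Let H be an RKHS on X, μ a Borel measure, and f, g ∈ H with ∫ e^{f} dμ < ∞, ∫ e^{g} dμ < ∞ and f ≠ g. Then whenever U/‖f−g‖ > C₀, 0 ≤ TV(P_f,P_g) − STV_{H_U,σ}(P_f,P_g) ≤ λ(U/‖f−g‖)·(1 − TV(P_f,P_g)). Consequently (also when f = g), lim_{U→∞} STV_{H_U,σ}(P_f, P_g) = TV(P_f, P_g). -/
open MeasureTheory Filter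
open scoped ENNReal NNReal

lemma aux_integral {X : Type*} [MeasurableSpace X] (μ : Measure X) (w : X → ℝ)
    (hw : Measurable w) (hw0 : ∀ x, 0 ≤ w x) (h : X → ℝ) :
    ∫ x, h x ∂(μ.withDensity fun x => ENNReal.ofReal (w x)) = ∫ x, w x * h x ∂μ := by
  have e1 : (fun x => ENNReal.ofReal (w x)) = fun x => (((fun x => (w x).toNNReal) x : ℝ≥0) : ℝ≥0∞) := rfl
  rw [e1, integral_withDensity_eq_integral_smul hw.real_toNNReal]
  congr 1; funext x
  simp [NNReal.smul_def, Real.coe_toNNReal _ (hw0 x)]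


set_option maxHeartbeats 2000000 in
/-- for `σ` satisfying Assumption (B) with decay rate `lam` (constant `C₀`),
the gap between TV and STV over `H_U` for two members of the kernel exponential family is
controlled by `lam (U/‖f-g‖)`, and the STV distance over `H_U` converges to the TV
distance as `U → ∞` (also when `f = g`). -/
theorem stv_kernel_exp_gap_and_limit {X : Type*} [MeasurableSpace X]
    {H : Type*} [NormedAddCommGroup H] [InnerProductSpace ℝ H]
    (φ : X → H) (hmeas : ∀ h : H, Measurable (evalH φ h))
    (μ : Measure X) (hμ : μ ≠ 0)
    (σ : ℝ → ℝ) (hB : AssumptionB σ)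
    (C₀ : ℝ) (hC₀ : 0 < C₀) (lam : ℝ → ℝ) (hlam : DecayRate σ C₀ lam)
    (f g : H)
    (hf : Integrable (fun x => Real.exp (evalH φ f x)) μ)
    (hg : Integrable (fun x => Real.exp (evalH φ g x)) μ) :
    (f ≠ g → ∀ U : ℝ, C₀ < U / ‖f - g‖ →
      0 ≤ TV (Pexp μ φ f) (Pexp μ φ g) - STV (ballFuns φ U) σ (Pexp μ φ f) (Pexp μ φ g) ∧
        TV (Pexp μ φ f) (Pexp μ φ g) - STV (ballFuns φ U) σ (Pexp μ φ f) (Pexp μ φ g) ≤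
          lam (U / ‖f - g‖) * (1 - TV (Pexp μ φ f) (Pexp μ φ g))) ∧
      Tendsto (fun U : ℝ => STV (ballFuns φ U) σ (Pexp μ φ f) (Pexp μ φ g)) atTop
        (nhds (TV (Pexp μ φ f) (Pexp μ φ g))) := by
  classical
  obtain ⟨hσc, hσm, hσbot, hσtop, hσsym⟩ := hB
  obtain ⟨hlam0, hlamb⟩ := hlam
  have hσ0 : ∀ z, 0 ≤ σ z := fun z => hσm.monotone.le_of_tendsto hσbot z
  have hσ1 : ∀ z, σ z ≤ 1 := fun z => hσm.monotone.ge_of_tendsto hσtop z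
  set Af := logPartition μ φ f with hAf
  set Ag := logPartition μ φ g with hAg
  set p : X → ℝ := fun x => Real.exp (evalH φ f x - Af) with hpdef
  set q : X → ℝ := fun x => Real.exp (evalH φ g x - Ag) with hqdef
  have hpmeas : Measurable p := Real.measurable_exp.comp ((hmeas f).sub measurable_const)
  have hqmeas : Measurable q := Real.measurable_exp.comp ((hmeas g).sub measurable_const)
  have hppos : ∀ x, 0 < p x := fun x => Real.exp_pos _
  have hqpos : ∀ x, 0 < q x := fun x => Real.exp_pos _
  have hp_eq : p = fun x => Real.exp (-Af) * Real.exp (evalH φ f x) := by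
    funext x
    show Real.exp (evalH φ f x - Af) = _
    rw [← Real.exp_add]; congr 1; ring
  have hq_eq : q = fun x => Real.exp (-Ag) * Real.exp (evalH φ g x) := by
    funext x
    show Real.exp (evalH φ g x - Ag) = _
    rw [← Real.exp_add]; congr 1; ring
  have hpint : Integrable p μ := by rw [hp_eq]; exact hf.const_mul _
  have hqint : Integrable q μ := by rw [hq_eq]; exact hg.const_mul _
  have hIf : 0 < ∫ x, Real.exp (evalH φ f x) ∂μ := by
    rw [integral_pos_iff_support_of_nonneg (fun x => (Real.exp_pos _).le) hf]
    have hs : Function.support (fun x => Real.exp (evalH φ f x)) = Set.univ := by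
      ext x; simp [Function.support, Real.exp_ne_zero]
    rw [hs]; exact Measure.measure_univ_pos.mpr hμ
  have hIg : 0 < ∫ x, Real.exp (evalH φ g x) ∂μ := by
    rw [integral_pos_iff_support_of_nonneg (fun x => (Real.exp_pos _).le) hg]
    have hs : Function.support (fun x => Real.exp (evalH φ g x)) = Set.univ := by
      ext x; simp [Function.support, Real.exp_ne_zero]
    rw [hs]; exact Measure.measure_univ_pos.mpr hμ
  have hpone : ∫ x, p x ∂μ = 1 := by
    rw [hp_eq, integral_const_mul, hAf]
    simp only [logPartition]
    rw [Real.exp_neg, Real.exp_log hIf]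
    exact inv_mul_cancel₀ hIf.ne'
  have hqone : ∫ x, q x ∂μ = 1 := by
    rw [hq_eq, integral_const_mul, hAg]
    simp only [logPartition]
    rw [Real.exp_neg, Real.exp_log hIg]
    exact inv_mul_cancel₀ hIg.ne'
  have hPint : ∀ h : X → ℝ, ∫ x, h x ∂(Pexp μ φ f) = ∫ x, p x * h x ∂μ := by
    intro h
    have e : Pexp μ φ f = μ.withDensity fun x => ENNReal.ofReal (p x) := rfl
    rw [e, aux_integral μ p hpmeas (fun x => (hppos x).le) h]
  have hQint : ∀ h : X → ℝ, ∫ x, h x ∂(Pexp μ φ g) = ∫ x, q x * h x ∂μ := by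
    intro h
    have e : Pexp μ φ g = μ.withDensity fun x => ENNReal.ofReal (q x) := rfl
    rw [e, aux_integral μ q hqmeas (fun x => (hqpos x).le) h]
  -- positive / negative parts
  set Dp : X → ℝ := fun x => max (p x - q x) 0 with hDpdef
  set Dq : X → ℝ := fun x => max (q x - p x) 0 with hDqdef
  have hDpmeas : Measurable Dp := (hpmeas.sub hqmeas).max measurable_const
  have hDqmeas : Measurable Dq := (hqmeas.sub hpmeas).max measurable_const
  have hDpint : Integrable Dp μ := (hpint.sub hqint).pos_part
  have hDqint : Integrable Dq μ := (hqint.sub hpint).pos_part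
  have hDp0 : ∀ x, (0:ℝ) ≤ Dp x := fun x => le_max_right _ _
  have hDq0 : ∀ x, (0:ℝ) ≤ Dq x := fun x => le_max_right _ _
  set T : ℝ := ∫ x, Dp x ∂μ with hTdef
  have hT0 : 0 ≤ T := integral_nonneg fun x => le_max_right _ _
  have hsub0 : ∫ x, (p x - q x) ∂μ = 0 := by
    rw [integral_sub hpint hqint, hpone, hqone]; ring
  have hDpq : ∀ x, Dp x - Dq x = p x - q x := by
    intro x
    have h := max_zero_sub_max_neg_zero_eq_self (p x - q x)
    simpa [hDpdef, hDqdef, neg_sub] using h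
  have hTq : ∫ x, Dq x ∂μ = T := by
    have h1 : ∫ x, (Dp x - Dq x) ∂μ = 0 := by
      rw [show (fun x => Dp x - Dq x) = fun x => p x - q x from funext hDpq]
      exact hsub0
    rw [integral_sub hDpint hDqint] at h1
    rw [hTdef]; linarith
  have hint_mul : ∀ (w h : X → ℝ), Integrable w μ → Measurable w → Measurable h → (∀ x, 0 ≤ w x) →
      (∀ x, 0 ≤ h x) → (∀ x, h x ≤ 1) → Integrable (fun x => w x * h x) μ := by
    intro w h hwint hwm hhm hw0 h0 h1
    refine hwint.mono ((hwm.mul hhm).aestronglyMeasurable) (ae_of_all _ fun x => ?_)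
    rw [Real.norm_eq_abs, Real.norm_eq_abs, abs_of_nonneg (mul_nonneg (hw0 x) (h0 x)),
      abs_of_nonneg (hw0 x)]
    exact mul_le_of_le_one_right (hw0 x) (h1 x)
  have hsplit : ∀ h : X → ℝ, Measurable h → (∀ x, 0 ≤ h x) → (∀ x, h x ≤ 1) →
      ∫ x, p x * h x ∂μ - ∫ x, q x * h x ∂μ = ∫ x, Dp x * h x ∂μ - ∫ x, Dq x * h x ∂μ := by
    intro h hm h0 h1
    rw [← integral_sub (hint_mul p h hpint hpmeas hm (fun x => (hppos x).le) h0 h1)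
        (hint_mul q h hqint hqmeas hm (fun x => (hqpos x).le) h0 h1),
      ← integral_sub (hint_mul Dp h hDpint hDpmeas hm hDp0 h0 h1)
        (hint_mul Dq h hDqint hDqmeas hm hDq0 h0 h1)]
    congr 1; funext x
    rw [← sub_mul, ← sub_mul, hDpq x]
  have hcore : ∀ h : X → ℝ, Measurable h → (∀ x, 0 ≤ h x) → (∀ x, h x ≤ 1) →
      |∫ x, p x * h x ∂μ - ∫ x, q x * h x ∂μ| ≤ T := by
    intro h hm h0 h1
    rw [hsplit h hm h0 h1]
    have h1a : ∫ x, Dp x * h x ∂μ ≤ T := by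
      rw [hTdef]
      exact integral_mono (hint_mul Dp h hDpint hDpmeas hm hDp0 h0 h1) hDpint
        fun x => mul_le_of_le_one_right (hDp0 x) (h1 x)
    have h1b : 0 ≤ ∫ x, Dp x * h x ∂μ := integral_nonneg fun x => mul_nonneg (hDp0 x) (h0 x)
    have h2a : ∫ x, Dq x * h x ∂μ ≤ T := by
      rw [← hTq]
      exact integral_mono (hint_mul Dq h hDqint hDqmeas hm hDq0 h0 h1) hDqint
        fun x => mul_le_of_le_one_right (hDq0 x) (h1 x)
    have h2b : 0 ≤ ∫ x, Dq x * h x ∂μ := integral_nonneg fun x => mul_nonneg (hDq0 x) (h0 x)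
    rw [abs_le]; constructor <;> linarith
  have hInd0 : ∀ (A : Set X) (x : X), 0 ≤ A.indicator (1 : X → ℝ) x := by
    intro A x; by_cases hx : x ∈ A <;> simp [Set.indicator, hx]
  have hInd1 : ∀ (A : Set X) (x : X), A.indicator (1 : X → ℝ) x ≤ 1 := by
    intro A x; by_cases hx : x ∈ A <;> simp [Set.indicator, hx]
  have hPA : ∀ A : Set X, MeasurableSet A →
      ((Pexp μ φ f) A).toReal = ∫ x, p x * A.indicator 1 x ∂μ := by
    intro A hA; rw [← measureReal_def, ← integral_indicator_one hA, hPint]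
  have hQA : ∀ A : Set X, MeasurableSet A →
      ((Pexp μ φ g) A).toReal = ∫ x, q x * A.indicator 1 x ∂μ := by
    intro A hA; rw [← measureReal_def, ← integral_indicator_one hA, hQint]
  have hTVterm : ∀ A : {A : Set X // MeasurableSet A},
      |((Pexp μ φ f) A.1).toReal - ((Pexp μ φ g) A.1).toReal| ≤ T := by
    rintro ⟨A, hA⟩
    rw [hPA A hA, hQA A hA]
    exact hcore _ (measurable_one.indicator hA) (hInd0 A) (hInd1 A)
  set Astar : Set X := {x | q x ≤ p x} with hAstardef
  have hAstar : MeasurableSet Astar := measurableSet_le hqmeas hpmeas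
  have hTVstar : |((Pexp μ φ f) Astar).toReal - ((Pexp μ φ g) Astar).toReal| = T := by
    rw [hPA Astar hAstar, hQA Astar hAstar,
      ← integral_sub (hint_mul p _ hpint hpmeas (measurable_one.indicator hAstar)
          (fun x => (hppos x).le) (hInd0 Astar) (hInd1 Astar))
        (hint_mul q _ hqint hqmeas (measurable_one.indicator hAstar)
          (fun x => (hqpos x).le) (hInd0 Astar) (hInd1 Astar))]
    have e : (fun x => p x * Astar.indicator 1 x - q x * Astar.indicator 1 x) = Dp := by
      funext x
      rw [← sub_mul]
      by_cases hx : x ∈ Astar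
      · have hqp : q x ≤ p x := hx
        rw [Set.indicator_of_mem hx, Pi.one_apply, mul_one]
        exact (max_eq_left (by linarith)).symm
      · have hqp : ¬ q x ≤ p x := hx
        rw [Set.indicator_of_notMem hx, mul_zero]
        exact (max_eq_right (by push_neg at hqp; linarith)).symm
    rw [e, ← hTdef, abs_of_nonneg hT0]
  haveI : Nonempty {A : Set X // MeasurableSet A} := ⟨⟨∅, MeasurableSet.empty⟩⟩
  have hbddTV : BddAbove (Set.range fun A : {A : Set X // MeasurableSet A} =>
      |((Pexp μ φ f) A.1).toReal - ((Pexp μ φ g) A.1).toReal|) := by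
    refine ⟨T, ?_⟩; rintro y ⟨A, rfl⟩; exact hTVterm A
  have hTV : TV (Pexp μ φ f) (Pexp μ φ g) = T := by
    unfold TV
    refine le_antisymm (ciSup_le hTVterm) ?_
    rw [← hTVstar]
    exact le_ciSup hbddTV ⟨Astar, hAstar⟩
  have hSTVterm : ∀ (U : ℝ) (ub : ↥(ballFuns φ U) × ℝ),
      |∫ x, σ (ub.1.1 x - ub.2) ∂(Pexp μ φ f) - ∫ x, σ (ub.1.1 x - ub.2) ∂(Pexp μ φ g)| ≤ T := by
    rintro U ⟨⟨u, hu⟩, b⟩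
    obtain ⟨v, -, rfl⟩ := hu
    rw [hPint, hQint]
    exact hcore _ (hσc.measurable.comp ((hmeas v).sub measurable_const))
      (fun x => hσ0 _) (fun x => hσ1 _)
  have hSTVle : ∀ U, STV (ballFuns φ U) σ (Pexp μ φ f) (Pexp μ φ g) ≤ T := by
    intro U; unfold STV; exact Real.iSup_le (hSTVterm U) hT0
  -- min p q facts
  have hmin_int : Integrable (fun x => min (p x) (q x)) μ := by
    refine hpint.mono ((hpmeas.min hqmeas).aestronglyMeasurable) (ae_of_all _ fun x => ?_)
    rw [Real.norm_eq_abs, Real.norm_eq_abs,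
      abs_of_nonneg (le_min (hppos x).le (hqpos x).le), abs_of_nonneg (hppos x).le]
    exact min_le_left _ _
  have hminT : ∫ x, min (p x) (q x) ∂μ = 1 - T := by
    have e : (fun x => p x - min (p x) (q x)) = Dp := by
      funext x
      rcases le_total (q x) (p x) with hx | hx
      · rw [min_eq_right hx]; exact (max_eq_left (by linarith)).symm
      · rw [min_eq_left hx]
        simp only [sub_self]
        exact (max_eq_right (by linarith)).symm
    have h2 : ∫ x, (p x - min (p x) (q x)) ∂μ = T := by
      rw [show (fun x => p x - min (p x) (q x)) = Dp from e, ← hTdef]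
    rw [integral_sub hpint hmin_int, hpone] at h2
    linarith
  -- the gap bound with the explicit witness
  have hmain : ∀ U : ℝ, ‖f - g‖ ≠ 0 → C₀ < U / ‖f - g‖ →
      T - lam (U / ‖f - g‖) * (1 - T) ≤ STV (ballFuns φ U) σ (Pexp μ φ f) (Pexp μ φ g) := by
    intro U hn0 hcU
    set c := U / ‖f - g‖ with hcdef
    have hnorm : 0 < ‖f - g‖ := lt_of_le_of_ne (norm_nonneg _) (Ne.symm hn0)
    have hcpos : 0 < c := lt_trans hC₀ hcU
    set v := c • (f - g) with hvdef
    have hUnorm : ‖v‖ ≤ U := by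
      rw [hvdef, norm_smul, Real.norm_eq_abs, abs_of_pos hcpos, hcdef,
        div_mul_cancel₀ _ hnorm.ne']
    set b := c * (Af - Ag) with hbdef
    have humem : evalH φ v ∈ ballFuns φ U := ⟨v, hUnorm, rfl⟩
    have harg : ∀ x, evalH φ v x - b =
        c * ((evalH φ f x - Af) - (evalH φ g x - Ag)) := by
      intro x
      have e : evalH φ v x = c * (evalH φ f x - evalH φ g x) := by
        simp only [evalH, hvdef]
        rw [real_inner_smul_left, inner_sub_left]
      rw [e, hbdef]; ring
    have hlamnn : 0 ≤ lam c := by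
      have h := hlamb c hcU 1 le_rfl
      simpa using h
    have hkey : ∀ x, Dp x - Dp x * σ (evalH φ v x - b) + Dq x * σ (evalH φ v x - b) ≤
        lam c * min (p x) (q x) := by
      intro x
      have hlogp : Real.log (p x) = evalH φ f x - Af := Real.log_exp _
      have hlogq : Real.log (q x) = evalH φ g x - Ag := Real.log_exp _
      by_cases hqp : q x ≤ p x
      · have hDqz : Dq x = 0 := by
          show max (q x - p x) 0 = 0
          exact max_eq_right (by linarith)
        have hDpe : Dp x = p x - q x := by
          show max (p x - q x) 0 = p x - q x
          exact max_eq_left (by linarith)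
        have ht1 : 1 ≤ p x / q x := (one_le_div (hqpos x)).mpr hqp
        have hlogt : Real.log (p x / q x) = (evalH φ f x - Af) - (evalH φ g x - Ag) := by
          rw [Real.log_div (hppos x).ne' (hqpos x).ne', hlogp, hlogq]
        have hz : -(evalH φ v x - b) = -(c * Real.log (p x / q x)) := by
          rw [harg x, hlogt]
        have hD := hlamb c hcU _ ht1
        have hmul : σ (-(c * Real.log (p x / q x))) * (p x / q x - 1) * q x ≤ lam c * q x :=
          mul_le_mul_of_nonneg_right hD (hqpos x).le
        have htq : (p x / q x - 1) * q x = p x - q x := by rw [sub_mul, div_mul_cancel₀ _ (hqpos x).ne', one_mul]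
        have hone : 1 - σ (evalH φ v x - b) = σ (-(evalH φ v x - b)) := by
          have := hσsym (evalH φ v x - b); linarith
        have hLHS : Dp x - Dp x * σ (evalH φ v x - b) + Dq x * σ (evalH φ v x - b)
            = σ (-(c * Real.log (p x / q x))) * (p x / q x - 1) * q x := by
          rw [hDqz, hDpe, ← hz]
          rw [mul_assoc, htq]
          nlinarith [hσsym (evalH φ v x - b)]
        rw [hLHS, min_eq_right hqp]
        exact hmul
      · push_neg at hqp
        have hDpz : Dp x = 0 := by
          show max (p x - q x) 0 = 0
          exact max_eq_right (by linarith)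
        have hDqe : Dq x = q x - p x := by
          show max (q x - p x) 0 = q x - p x
          exact max_eq_left (by linarith)
        have ht1 : 1 ≤ q x / p x := (one_le_div (hppos x)).mpr hqp.le
        have hlogt : Real.log (q x / p x) = (evalH φ g x - Ag) - (evalH φ f x - Af) := by
          rw [Real.log_div (hqpos x).ne' (hppos x).ne', hlogp, hlogq]
        have hz : evalH φ v x - b = -(c * Real.log (q x / p x)) := by
          rw [harg x, hlogt]; ring
        have hD := hlamb c hcU _ ht1
        have hmul : σ (-(c * Real.log (q x / p x))) * (q x / p x - 1) * p x ≤ lam c * p x :=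
          mul_le_mul_of_nonneg_right hD (hppos x).le
        have htq : (q x / p x - 1) * p x = q x - p x := by rw [sub_mul, div_mul_cancel₀ _ (hppos x).ne', one_mul]
        have hLHS : Dp x - Dp x * σ (evalH φ v x - b) + Dq x * σ (evalH φ v x - b)
            = σ (-(c * Real.log (q x / p x))) * (q x / p x - 1) * p x := by
          rw [hDpz, hDqe, hz, mul_assoc, htq]; ring
        rw [hLHS, min_eq_left hqp.le]
        exact hmul
    -- integrate
    have hSm : Measurable (fun x => σ (evalH φ v x - b)) :=
      hσc.measurable.comp ((hmeas v).sub measurable_const)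
    have hS0 : ∀ x, 0 ≤ σ (evalH φ v x - b) := fun x => hσ0 _
    have hS1 : ∀ x, σ (evalH φ v x - b) ≤ 1 := fun x => hσ1 _
    have hiDpS := hint_mul Dp _ hDpint hDpmeas hSm hDp0 hS0 hS1
    have hiDqS := hint_mul Dq _ hDqint hDqmeas hSm hDq0 hS0 hS1
    have hIneq : ∫ x, (Dp x - Dp x * σ (evalH φ v x - b) + Dq x * σ (evalH φ v x - b)) ∂μ ≤
        lam c * (1 - T) := by
      have h := integral_mono ((hDpint.sub hiDpS).add hiDqS)
        (hmin_int.const_mul (lam c)) hkey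
      rwa [integral_const_mul, hminT] at h
    have h1' : Integrable (fun x => Dp x - Dp x * σ (evalH φ v x - b)) μ := hDpint.sub hiDpS
    have hsum : ∫ x, (Dp x - Dp x * σ (evalH φ v x - b) + Dq x * σ (evalH φ v x - b)) ∂μ
        = T - (∫ x, Dp x * σ (evalH φ v x - b) ∂μ - ∫ x, Dq x * σ (evalH φ v x - b) ∂μ) := by
      rw [integral_add h1' hiDqS, integral_sub hDpint hiDpS, ← hTdef]
      ring
    have hV : T - lam c * (1 - T) ≤
        ∫ x, σ (evalH φ v x - b) ∂(Pexp μ φ f) - ∫ x, σ (evalH φ v x - b) ∂(Pexp μ φ g) := by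
      rw [hPint, hQint, hsplit _ hSm hS0 hS1]
      rw [hsum] at hIneq
      linarith
    have hbddS : BddAbove (Set.range fun ub : ↥(ballFuns φ U) × ℝ =>
        |∫ x, σ (ub.1.1 x - ub.2) ∂(Pexp μ φ f) - ∫ x, σ (ub.1.1 x - ub.2) ∂(Pexp μ φ g)|) := by
      refine ⟨T, ?_⟩; rintro y ⟨ub, rfl⟩; exact hSTVterm U ub
    have hwit : |∫ x, σ (evalH φ v x - b) ∂(Pexp μ φ f) - ∫ x, σ (evalH φ v x - b) ∂(Pexp μ φ g)|
        ≤ STV (ballFuns φ U) σ (Pexp μ φ f) (Pexp μ φ g) := by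
      unfold STV
      exact le_ciSup hbddS (⟨⟨evalH φ v, humem⟩, b⟩ : ↥(ballFuns φ U) × ℝ)
    have habs := le_abs_self (∫ x, σ (evalH φ v x - b) ∂(Pexp μ φ f) -
      ∫ x, σ (evalH φ v x - b) ∂(Pexp μ φ g))
    linarith
  constructor
  · intro hfg U hcU
    have hn0 : ‖f - g‖ ≠ 0 := by
      simpa [sub_eq_zero] using hfg
    refine ⟨?_, ?_⟩
    · rw [hTV]; linarith [hSTVle U]
    · rw [hTV]; linarith [hmain U hn0 hcU, hSTVle U]
  · rcases eq_or_ne f g with hfg | hfg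
    · subst hfg
      have hpq : p = q := by
        funext x
        show Real.exp (evalH φ f x - Af) = Real.exp (evalH φ f x - Ag)
        rw [hAf, hAg]
      have hTz : T = 0 := by
        rw [hTdef]
        have e : Dp = fun _ => (0:ℝ) := by
          funext x
          show max (p x - q x) 0 = 0
          rw [hpq, sub_self, max_self]
        rw [e, integral_zero]
      have hSTV0 : ∀ U, STV (ballFuns φ U) σ (Pexp μ φ f) (Pexp μ φ f) = 0 := by
        intro U
        refine le_antisymm ?_ ?_
        · have := hSTVle U; rw [hTz] at this; exact this
        · unfold STV; exact Real.iSup_nonneg fun _ => abs_nonneg _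
      rw [hTV, hTz]
      simp only [hSTV0]
      exact tendsto_const_nhds
    · have hn0 : ‖f - g‖ ≠ 0 := by simpa [sub_eq_zero] using hfg
      have hnorm : 0 < ‖f - g‖ := lt_of_le_of_ne (norm_nonneg _) (Ne.symm hn0)
      rw [hTV]
      have hdiv : Tendsto (fun U : ℝ => U / ‖f - g‖) atTop atTop :=
        Tendsto.atTop_div_const hnorm tendsto_id
      have hlow : Tendsto (fun U : ℝ => T - lam (U / ‖f - g‖) * (1 - T)) atTop (nhds T) := by
        have h2 : Tendsto (fun U : ℝ => lam (U / ‖f - g‖)) atTop (nhds 0) := hlam0.comp hdiv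
        have h3 := tendsto_const_nhds (α := ℝ) (x := T) (f := atTop)
        have := h3.sub (h2.mul_const (1 - T))
        simpa using this
      refine tendsto_of_tendsto_of_tendsto_of_le_of_le' hlow tendsto_const_nhds ?_ ?_
      · filter_upwards [eventually_gt_atTop (C₀ * ‖f - g‖)] with U hUU
        exact hmain U hn0 ((lt_div_iff₀ hnorm).mpr hUU)
      · exact Eventually.of_forall hSTVle
end

section
/- Let σ(z) = 1/(1+e^{−z}) be the sigmoid function, H an RKHS on X, μ a Borel measure, and f, g ∈ H with ∫ e^{f} dμ < ∞ and ∫ e^{g} dμ < ∞. Then for every U > ‖f−g‖, 0 ≤ TV(P_f,P_g) − STV_{H_U,σ}(P_f,P_g) ≤ (‖f−g‖/U)·(1 − TV(P_f,P_g)) ≤ ‖f−g‖/U. -/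
open MeasureTheory Filter
open scoped ENNReal NNReal

lemma sigmoid_nonneg (z : ℝ) : 0 ≤ sigmoid z := by
  unfold sigmoid; positivity

lemma sigmoid_le_one (z : ℝ) : sigmoid z ≤ 1 := by
  unfold sigmoid
  rw [div_le_one (by positivity)]
  nlinarith [Real.exp_pos (-z)]

lemma one_sub_sigmoid (z : ℝ) : 1 - sigmoid z = sigmoid (-z) := by
  unfold sigmoid
  have h1 : (0:ℝ) < 1 + Real.exp (-z) := by positivity
  have h2 : (0:ℝ) < 1 + Real.exp z := by positivity
  rw [Real.exp_neg] at *
  have h3 : Real.exp z ≠ 0 := (Real.exp_pos z).ne'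
  field_simp
  ring

lemma sigmoid_continuous : Continuous sigmoid := by
  unfold sigmoid
  exact continuous_const.div (continuous_const.add (Real.continuous_exp.comp continuous_neg))
    (fun z => by positivity)

lemma key_ineq {t z : ℝ} (ht : 1 ≤ t) (hz : 0 ≤ z) :
    sigmoid (-(t*z)) * (Real.exp z - 1) ≤ 1 / t := by
  have ht0 : 0 < t := lt_of_lt_of_le one_pos ht
  have hx : (0:ℝ) ≤ Real.exp z - 1 := by nlinarith [Real.one_le_exp hz]
  have hbern : 1 + t * (Real.exp z - 1) ≤ (1 + (Real.exp z - 1)) ^ t :=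
    one_add_mul_self_le_rpow_one_add (by linarith) ht
  have hpow : (1 + (Real.exp z - 1)) ^ t = Real.exp (t * z) := by
    rw [show 1 + (Real.exp z - 1) = Real.exp z by ring, ← Real.exp_mul]; ring_nf
  rw [hpow] at hbern
  unfold sigmoid
  rw [neg_neg, div_mul_eq_mul_div, div_le_div_iff₀ (by positivity) ht0]
  nlinarith [Real.exp_pos (t*z)]

section Core
variable {X : Type*} [MeasurableSpace X] {μ : Measure X}

lemma toReal_withDensity {p : X → ℝ} (hpm : Measurable p) (hp0 : ∀ x, 0 ≤ p x)
    (hpi : Integrable p μ) {A : Set X} (hA : MeasurableSet A) :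
    ((μ.withDensity fun x => ENNReal.ofReal (p x)) A).toReal = ∫ x in A, p x ∂μ := by
  rw [withDensity_apply _ hA,
    ← ofReal_integral_eq_lintegral_ofReal (hpi.restrict) (Filter.Eventually.of_forall hp0),
    ENNReal.toReal_ofReal (setIntegral_nonneg hA fun x _ => hp0 x)]

lemma integral_withDensity' {p : X → ℝ} (hpm : Measurable p) (hp0 : ∀ x, 0 ≤ p x)
    (h : X → ℝ) :
    ∫ x, h x ∂(μ.withDensity fun x => ENNReal.ofReal (p x)) = ∫ x, h x * p x ∂μ := by
  have : (fun x => ENNReal.ofReal (p x)) = fun x => ((Real.toNNReal (p x) : ℝ≥0) : ℝ≥0∞) := rfl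
  rw [this, integral_withDensity_eq_integral_smul (hpm.real_toNNReal) h]
  congr 1; ext x
  rw [NNReal.smul_def, Real.coe_toNNReal _ (hp0 x), smul_eq_mul, mul_comm]

end Core

/-- for the sigmoid function, the gap between the TV distance and the STV
distance over `H_U` between two members of the kernel exponential family is at most
`(‖f-g‖/U)·(1 - TV) ≤ ‖f-g‖/U` whenever `U > ‖f-g‖`. -/
theorem stv_sigmoid_kernel_exp_gap {X : Type*} [MeasurableSpace X]
    {H : Type*} [NormedAddCommGroup H] [InnerProductSpace ℝ H]
    (φ : X → H) (hmeas : ∀ h : H, Measurable (evalH φ h))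
    (μ : Measure X) (hμ : μ ≠ 0)
    (f g : H)
    (hf : Integrable (fun x => Real.exp (evalH φ f x)) μ)
    (hg : Integrable (fun x => Real.exp (evalH φ g x)) μ)
    (U : ℝ) (hU : ‖f - g‖ < U) :
    0 ≤ TV (Pexp μ φ f) (Pexp μ φ g) - STV (ballFuns φ U) sigmoid (Pexp μ φ f) (Pexp μ φ g) ∧
      TV (Pexp μ φ f) (Pexp μ φ g) - STV (ballFuns φ U) sigmoid (Pexp μ φ f) (Pexp μ φ g) ≤
        (‖f - g‖ / U) * (1 - TV (Pexp μ φ f) (Pexp μ φ g)) ∧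
      (‖f - g‖ / U) * (1 - TV (Pexp μ φ f) (Pexp μ φ g)) ≤ ‖f - g‖ / U := by
  have hU0 : 0 < U := lt_of_le_of_lt (norm_nonneg _) hU
  set u := evalH φ f with hu_def
  set v := evalH φ g with hv_def
  set a := logPartition μ φ f with ha_def
  set b := logPartition μ φ g with hb_def
  set p : X → ℝ := fun x => Real.exp (u x - a) with hp_def
  set q : X → ℝ := fun x => Real.exp (v x - b) with hq_def
  set P : Measure X := Pexp μ φ f with hP_def
  set Q : Measure X := Pexp μ φ g with hQ_def
  have hPwd : P = μ.withDensity fun x => ENNReal.ofReal (p x) := rfl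
  have hQwd : Q = μ.withDensity fun x => ENNReal.ofReal (q x) := rfl
  clear_value u v a b p q P Q
  have hum : Measurable u := hu_def ▸ hmeas f
  have hvm : Measurable v := hv_def ▸ hmeas g
  have hpm : Measurable p := by
    rw [hp_def]; exact (hum.sub measurable_const).exp
  have hqm : Measurable q := by
    rw [hq_def]; exact (hvm.sub measurable_const).exp
  have hp0 : ∀ x, 0 ≤ p x := by
    intro x; rw [hp_def]; exact (Real.exp_pos _).le
  have hq0 : ∀ x, 0 ≤ q x := by
    intro x; rw [hq_def]; exact (Real.exp_pos _).le
  have hpi : Integrable p μ := by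
    have : p = fun x => Real.exp (u x) / Real.exp a := by
      rw [hp_def]; funext x; exact Real.exp_sub _ _
    rw [this]; exact hf.div_const _
  have hqi : Integrable q μ := by
    have : q = fun x => Real.exp (v x) / Real.exp b := by
      rw [hq_def]; funext x; exact Real.exp_sub _ _
    rw [this]; exact hg.div_const _
  -- total mass 1
  have hIu : 0 < ∫ x, Real.exp (u x) ∂μ := by
    rw [integral_pos_iff_support_of_nonneg (fun x => (Real.exp_pos _).le) hf]
    have : (Function.support fun x => Real.exp (u x)) = Set.univ := by
      ext x; simp [Function.support, (Real.exp_pos _).ne']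
    rw [this]
    exact Measure.measure_univ_pos.2 hμ
  have hIv : 0 < ∫ x, Real.exp (v x) ∂μ := by
    rw [integral_pos_iff_support_of_nonneg (fun x => (Real.exp_pos _).le) hg]
    have : (Function.support fun x => Real.exp (v x)) = Set.univ := by
      ext x; simp [Function.support, (Real.exp_pos _).ne']
    rw [this]
    exact Measure.measure_univ_pos.2 hμ
  have hp1 : ∫ x, p x ∂μ = 1 := by
    have : ∫ x, p x ∂μ = (∫ x, Real.exp (u x) ∂μ) / Real.exp a := by
      rw [hp_def, ← integral_div]; congr 1; funext x; exact Real.exp_sub _ _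
    rw [this, ha_def, logPartition, ← hu_def, Real.exp_log hIu, div_self hIu.ne']
  have hq1 : ∫ x, q x ∂μ = 1 := by
    have : ∫ x, q x ∂μ = (∫ x, Real.exp (v x) ∂μ) / Real.exp b := by
      rw [hq_def, ← integral_div]; congr 1; funext x; exact Real.exp_sub _ _
    rw [this, hb_def, logPartition, ← hv_def, Real.exp_log hIv, div_self hIv.ne']
  set S : Set X := {x | q x ≤ p x} with hS_def
  have hS : MeasurableSet S := measurableSet_le hqm hpm
  have hpqi : Integrable (fun x => p x - q x) μ := hpi.sub hqi
  have hpq0 : ∫ x, (p x - q x) ∂μ = 0 := by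
    rw [integral_sub hpi hqi, hp1, hq1, sub_self]
  set D : ℝ := ∫ x in S, (p x - q x) ∂μ with hD_def
  have hD0 : 0 ≤ D := setIntegral_nonneg hS (fun x hx => sub_nonneg.2 hx)
  -- one-sided bound for arbitrary measurable set
  have hone : ∀ A : Set X, MeasurableSet A → ∫ x in A, (p x - q x) ∂μ ≤ D := by
    intro A hA
    have e1 : ∫ x in A ∩ S, (p x - q x) ∂μ + ∫ x in A \ S, (p x - q x) ∂μ
        = ∫ x in A, (p x - q x) ∂μ := integral_inter_add_diff hS hpqi.integrableOn
    have e2 : ∫ x in S ∩ A, (p x - q x) ∂μ + ∫ x in S \ A, (p x - q x) ∂μ = D :=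
      integral_inter_add_diff hA hpqi.integrableOn
    have h3 : ∫ x in A \ S, (p x - q x) ∂μ ≤ 0 :=
      setIntegral_nonpos (hA.diff hS) fun x hx => by
        have : ¬ q x ≤ p x := hx.2
        linarith [lt_of_not_ge this]
    have h4 : 0 ≤ ∫ x in S \ A, (p x - q x) ∂μ :=
      setIntegral_nonneg (hS.diff hA) fun x hx => sub_nonneg.2 hx.1
    have h5 : S ∩ A = A ∩ S := Set.inter_comm _ _
    rw [h5] at e2
    linarith
  have habs : ∀ A : Set X, MeasurableSet A → |∫ x in A, (p x - q x) ∂μ| ≤ D := by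
    intro A hA
    rw [abs_le]
    refine ⟨?_, hone A hA⟩
    have h1 := hone Aᶜ hA.compl
    have h2 : ∫ x in A, (p x - q x) ∂μ + ∫ x in Aᶜ, (p x - q x) ∂μ = 0 := by
      rw [integral_add_compl hA hpqi, hpq0]
    linarith
  -- value of measures
  have hPA : ∀ A : Set X, MeasurableSet A →
      (P A).toReal - (Q A).toReal = ∫ x in A, (p x - q x) ∂μ := by
    intro A hA
    rw [hPwd, hQwd, toReal_withDensity hpm hp0 hpi hA, toReal_withDensity hqm hq0 hqi hA,
      ← integral_sub hpi.restrict hqi.restrict]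
  -- TV = D
  have hTVle : ∀ A : {A : Set X // MeasurableSet A}, |(P A.1).toReal - (Q A.1).toReal| ≤ D := by
    intro A; rw [hPA A.1 A.2]; exact habs A.1 A.2
  have hTV : TV P Q = D := by
    apply le_antisymm
    · exact ciSup_le hTVle
    · refine le_ciSup_of_le ⟨D, ?_⟩ (⟨S, hS⟩ : {A : Set X // MeasurableSet A}) ?_
      · rintro x ⟨A, rfl⟩; exact hTVle A
      · rw [hPA S hS, hD_def]; exact le_abs_self _
  -- STV values and bound
  have hsig_int : ∀ (r : X → ℝ), Measurable r → Integrable r μ → ∀ (w : X → ℝ), Measurable w →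
      ∀ c : ℝ, Integrable (fun x => sigmoid (w x - c) * r x) μ := by
    intro r hrm hri w hw c
    refine hri.bdd_mul (c := 1) ?_ (Filter.Eventually.of_forall fun x => ?_)
    · exact (sigmoid_continuous.measurable.comp (hw.sub measurable_const)).aestronglyMeasurable
    · rw [Real.norm_eq_abs, abs_of_nonneg (sigmoid_nonneg _)]
      exact sigmoid_le_one _
  have hInt_sig : ∀ (w : X → ℝ), Measurable w → ∀ c : ℝ,
      ∫ x, sigmoid (w x - c) ∂P - ∫ x, sigmoid (w x - c) ∂Q
        = ∫ x, sigmoid (w x - c) * (p x - q x) ∂μ := by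
    intro w hw c
    rw [hPwd, hQwd, integral_withDensity' hpm hp0, integral_withDensity' hqm hq0,
      ← integral_sub (hsig_int p hpm hpi w hw c) (hsig_int q hqm hqi w hw c)]
    congr 1; funext x; ring
  have hsig_bdd : ∀ (w : X → ℝ), Measurable w → ∀ c : ℝ,
      |∫ x, sigmoid (w x - c) * (p x - q x) ∂μ| ≤ D := by
    intro w hw c
    have hint : Integrable (fun x => sigmoid (w x - c) * (p x - q x)) μ :=
      hsig_int _ (hpm.sub hqm) hpqi w hw c
    have hsplit : ∫ x in S, sigmoid (w x - c) * (p x - q x) ∂μ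
        + ∫ x in Sᶜ, sigmoid (w x - c) * (p x - q x) ∂μ
        = ∫ x, sigmoid (w x - c) * (p x - q x) ∂μ := integral_add_compl hS hint
    have hcomp : ∫ x in S, (p x - q x) ∂μ + ∫ x in Sᶜ, (p x - q x) ∂μ = 0 := by
      rw [integral_add_compl hS hpqi, hpq0]
    have h1 : ∫ x in S, sigmoid (w x - c) * (p x - q x) ∂μ ≤ D := by
      refine setIntegral_mono_on hint.integrableOn hpqi.integrableOn hS fun x hx => ?_
      have h0 : 0 ≤ p x - q x := sub_nonneg.2 hx
      nlinarith [sigmoid_le_one (w x - c), sigmoid_nonneg (w x - c)]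
    have h2 : ∫ x in Sᶜ, sigmoid (w x - c) * (p x - q x) ∂μ ≤ 0 := by
      refine setIntegral_nonpos hS.compl fun x hx => ?_
      have : p x - q x ≤ 0 := by
        have : ¬ q x ≤ p x := hx
        linarith [lt_of_not_ge this]
      exact mul_nonpos_of_nonneg_of_nonpos (sigmoid_nonneg _) this
    have h3 : 0 ≤ ∫ x in S, sigmoid (w x - c) * (p x - q x) ∂μ := by
      refine setIntegral_nonneg hS fun x hx => ?_
      exact mul_nonneg (sigmoid_nonneg _) (sub_nonneg.2 hx)
    have h4 : ∫ x in Sᶜ, (p x - q x) ∂μ ≤ ∫ x in Sᶜ, sigmoid (w x - c) * (p x - q x) ∂μ := by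
      refine setIntegral_mono_on hpqi.integrableOn hint.integrableOn hS.compl fun x hx => ?_
      have hle : p x - q x ≤ 0 := by
        have : ¬ q x ≤ p x := hx
        linarith [lt_of_not_ge this]
      nlinarith [sigmoid_le_one (w x - c), sigmoid_nonneg (w x - c)]
    rw [abs_le]
    constructor <;> linarith
  have hSTVle : ∀ ub : (ballFuns φ U) × ℝ,
      |∫ x, sigmoid (ub.1.1 x - ub.2) ∂P - ∫ x, sigmoid (ub.1.1 x - ub.2) ∂Q| ≤ D := by
    rintro ⟨⟨w, hw⟩, c⟩
    obtain ⟨h, hhU, rfl⟩ := hw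
    rw [hInt_sig _ (hmeas h) c]
    exact hsig_bdd _ (hmeas h) c
  have hSTVbdd : BddAbove (Set.range fun ub : (ballFuns φ U) × ℝ =>
      |∫ x, sigmoid (ub.1.1 x - ub.2) ∂P - ∫ x, sigmoid (ub.1.1 x - ub.2) ∂Q|) := by
    refine ⟨D, ?_⟩; rintro x ⟨ub, rfl⟩; exact hSTVle ub
  have hne : Nonempty ((ballFuns φ U) × ℝ) := by
    refine ⟨⟨⟨evalH φ 0, ⟨0, by simp [hU0.le], rfl⟩⟩, 0⟩⟩
  have hSTV_le_TV : STV (ballFuns φ U) sigmoid P Q ≤ D := ciSup_le hSTVle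
  -- lower bound on STV
  have hSTV_ge : D - STV (ballFuns φ U) sigmoid P Q ≤ (‖f - g‖ / U) * (1 - D) := by
    by_cases hfg : f = g
    · have hpq : p = q := by
        simp only [hp_def, hq_def, hu_def, hv_def, ha_def, hb_def, hfg]
      have hD : D = 0 := by
        rw [hD_def]
        simp [hpq]
      have hSTV0 : 0 ≤ STV (ballFuns φ U) sigmoid P Q :=
        le_ciSup_of_le hSTVbdd (Classical.arbitrary _) (abs_nonneg _)
      rw [hD, hfg]
      simp only [sub_self, norm_zero, zero_div, zero_mul]
      linarith
    · have hr0 : (0:ℝ) < ‖f - g‖ := by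
        rw [norm_pos_iff]
        exact sub_ne_zero.2 hfg
      set t : ℝ := U / ‖f - g‖ with ht_def
      have ht1 : 1 < t := (one_lt_div hr0).2 hU
      have ht0 : 0 < t := lt_trans one_pos ht1
      set h₀ : H := t • (f - g) with hh0_def
      have hh0norm : ‖h₀‖ ≤ U := by
        rw [hh0_def, norm_smul, Real.norm_eq_abs, abs_of_pos ht0, ht_def,
          div_mul_cancel₀ _ hr0.ne']
      have hmem : evalH φ h₀ ∈ ballFuns φ U := ⟨h₀, hh0norm, rfl⟩
      set c₀ : ℝ := t * (a - b) with hc0_def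
      set s : X → ℝ := fun x => (u x - a) - (v x - b) with hs_def
      have hkey : ∀ x, evalH φ h₀ x - c₀ = t * s x := by
        intro x
        have : evalH φ h₀ x = t * (u x - v x) := by
          simp only [hh0_def, evalH, hu_def, hv_def]
          rw [real_inner_smul_left, inner_sub_left]
        rw [this, hc0_def, hs_def]; ring
      have hsm : Measurable s := (hum.sub measurable_const).sub (hvm.sub measurable_const)
      have hps : ∀ x, p x = q x * Real.exp (s x) := by
        intro x
        simp only [hp_def, hq_def, hs_def]
        rw [← Real.exp_add]
        congr 1; ring
      set val : ℝ := ∫ x, sigmoid (t * s x) * (p x - q x) ∂μ with hval_def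
      have hvalint : Integrable (fun x => sigmoid (t * s x) * (p x - q x)) μ := by
        have := hsig_int _ (hpm.sub hqm) hpqi (evalH φ h₀) (hmeas h₀) c₀
        simpa only [hkey, Pi.sub_apply] using this
      have hval_le : val ≤ STV (ballFuns φ U) sigmoid P Q := by
        refine le_ciSup_of_le hSTVbdd ⟨⟨evalH φ h₀, hmem⟩, c₀⟩ ?_
        have := hInt_sig (evalH φ h₀) (hmeas h₀) c₀
        calc val = ∫ x, sigmoid (evalH φ h₀ x - c₀) * (p x - q x) ∂μ := by
                    rw [hval_def]; congr 1; funext x; rw [hkey]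
          _ = ∫ x, sigmoid (evalH φ h₀ x - c₀) ∂P - ∫ x, sigmoid (evalH φ h₀ x - c₀) ∂Q :=
              this.symm
          _ ≤ |∫ x, sigmoid (evalH φ h₀ x - c₀) ∂P - ∫ x, sigmoid (evalH φ h₀ x - c₀) ∂Q| :=
              le_abs_self _
      -- pointwise bound
      set F : X → ℝ := fun x =>
        S.indicator (fun y => p y - q y) x - sigmoid (t * s x) * (p x - q x) with hF_def
      set m : X → ℝ := fun x => min (p x) (q x) with hm_def
      have hm_eq : ∀ x, m x = p x - S.indicator (fun y => p y - q y) x := by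
        intro x
        by_cases hx : x ∈ S
        · rw [hm_def]
          simp only [Set.indicator_of_mem hx]
          have : q x ≤ p x := hx
          rw [min_eq_right this]; ring
        · rw [hm_def]
          simp only [Set.indicator_of_notMem hx]
          have : p x < q x := lt_of_not_ge hx
          rw [min_eq_left this.le]; ring
      have hclaim : ∀ x, F x ≤ (1/t) * m x := by
        intro x
        by_cases hx : x ∈ S
        · have hqp : q x ≤ p x := hx
          have hs0 : 0 ≤ s x := by
            have h' : q x ≤ p x := hqp
            rw [hp_def, hq_def] at h'
            have := Real.exp_le_exp.1 h'
            simp only [hs_def]; linarith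
          have hk := key_ineq ht1.le hs0
          have hFx : F x = (1 - sigmoid (t * s x)) * (p x - q x) := by
            rw [hF_def]; dsimp only
            rw [Set.indicator_of_mem hx]; ring
          rw [hFx, one_sub_sigmoid, hm_def]
          dsimp only
          rw [min_eq_right hqp]
          have hpx := hps x
          nlinarith [hq0 x, sigmoid_nonneg (-(t * s x))]
        · have hpq' : p x < q x := lt_of_not_ge hx
          have hs0 : 0 ≤ -s x := by
            have h' : p x ≤ q x := hpq'.le
            rw [hp_def, hq_def] at h'
            have := Real.exp_le_exp.1 h'
            simp only [hs_def]; linarith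
          have hk := key_ineq ht1.le hs0
          have hqx : q x = p x * Real.exp (-s x) := by
            simp only [hp_def, hq_def, hs_def]
            rw [← Real.exp_add]
            congr 1; ring
          have hFx : F x = sigmoid (t * s x) * (q x - p x) := by
            rw [hF_def]; dsimp only
            rw [Set.indicator_of_notMem hx]; ring
          have hsg : sigmoid (t * s x) = sigmoid (-(t * -s x)) := by
            congr 1; ring
          rw [hFx, hsg, hm_def]
          dsimp only
          rw [min_eq_left hpq'.le]
          nlinarith [hp0 x, sigmoid_nonneg (-(t * -s x))]
      have hFint : Integrable F μ := (hpqi.indicator hS).sub hvalint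
      have hmint : Integrable m μ := by
        have : m = fun x => p x - S.indicator (fun y => p y - q y) x := funext hm_eq
        rw [this]
        exact hpi.sub (hpqi.indicator hS)
      have hintF : ∫ x, F x ∂μ = D - val := by
        rw [hF_def, integral_sub (hpqi.indicator hS) hvalint, integral_indicator hS,
          hD_def, hval_def]
      have hintm : ∫ x, m x ∂μ = 1 - D := by
        have : m = fun x => p x - S.indicator (fun y => p y - q y) x := funext hm_eq
        rw [this, integral_sub hpi (hpqi.indicator hS), integral_indicator hS, hp1, hD_def]
      have hmono : ∫ x, F x ∂μ ≤ ∫ x, (1/t) * m x ∂μ :=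
        integral_mono hFint (hmint.const_mul _) hclaim
      rw [integral_const_mul, hintm, hintF] at hmono
      have htinv : 1 / t = ‖f - g‖ / U := by
        rw [ht_def, one_div_div]
      rw [htinv] at hmono
      linarith
  refine ⟨?_, ?_, ?_⟩
  · rw [hTV]; linarith
  · rw [hTV]; exact hSTV_ge
  · rw [hTV]
    exact mul_le_of_le_one_right (div_nonneg (norm_nonneg (f - g)) hU0.le) (by linarith)
end

section
/- Let H be an RKHS on X with kernel k satisfying sup_{x∈X} k(x,x) ≤ K² < ∞, and let f, g ∈ H with ∫ e^{f} dμ < ∞ and ∫ e^{g} dμ < ∞. Then: (i) for every u ∈ H, lim_{t→0} (A(f+tu) − A(f))/t = ∫ u dP_f; (ii) ∫ (f−g) dP_g ≤ A(f) − A(g) ≤ ∫ (f−g) dP_f; and (iii) |A(f) − A(g)| ≤ K·‖f−g‖. -/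
open MeasureTheory Filter
open scoped ENNReal NNReal

section AuxLemmas

lemma myIntBdd {X : Type*} [MeasurableSpace X] {ν : Measure X} [IsFiniteMeasure ν]
    {w : X → ℝ} {C : ℝ} (hm : Measurable w) (hb : ∀ x, |w x| ≤ C) : Integrable w ν :=
  ⟨hm.aestronglyMeasurable, HasFiniteIntegral.of_bounded (ae_of_all _ fun x => by
    simpa using hb x)⟩

lemma myJensen {X : Type*} [MeasurableSpace X] (P : Measure X) [IsProbabilityMeasure P]
    (w : X → ℝ) (hw : Integrable w P) (hew : Integrable (fun x => Real.exp (w x)) P) :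
    Real.exp (∫ x, w x ∂P) ≤ ∫ x, Real.exp (w x) ∂P := by
  set m := ∫ x, w x ∂P with hm
  have h1 : Integrable (fun x => w x - m + 1) P :=
    (hw.sub (integrable_const m)).add (integrable_const 1)
  have h2 : Integrable (fun x => Real.exp (w x - m)) P :=
    (hew.mul_const (Real.exp m)⁻¹).congr (ae_of_all _ fun x => by
      simp [Real.exp_sub, div_eq_mul_inv])
  have h3 : ∫ x, (w x - m + 1) ∂P ≤ ∫ x, Real.exp (w x - m) ∂P :=
    integral_mono h1 h2 fun x => Real.add_one_le_exp _
  have hsub : Integrable (fun x => w x - m) P := hw.sub (integrable_const m)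
  have h4 : ∫ x, (w x - m + 1) ∂P = 1 := by
    simp [integral_add hsub (integrable_const 1), integral_sub hw (integrable_const m)]
    exact sub_eq_zero.mpr hm.symm
  have h5 : ∫ x, Real.exp (w x - m) ∂P = (∫ x, Real.exp (w x) ∂P) / Real.exp m := by
    simp_rw [Real.exp_sub]
    exact integral_div _ _
  rw [h4, h5] at h3
  rwa [le_div_iff₀ (Real.exp_pos m), one_mul] at h3

lemma myPexpInt {X H : Type*} [MeasurableSpace X] [NormedAddCommGroup H]
    [InnerProductSpace ℝ H] (μ : Measure X) (φ : X → H) (h : H)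
    (hm : Measurable (evalH φ h)) (w : X → ℝ) :
    ∫ x, w x ∂(Pexp μ φ h)
      = ∫ x, Real.exp (evalH φ h x - logPartition μ φ h) * w x ∂μ := by
  have hds : (fun x => ENNReal.ofReal (Real.exp (evalH φ h x - logPartition μ φ h)))
      = fun x => ((Real.toNNReal (Real.exp (evalH φ h x - logPartition μ φ h)) : NNReal) : ENNReal) :=
    rfl
  rw [Pexp, hds, integral_withDensity_eq_integral_smul
      (show Measurable (fun x => Real.toNNReal (Real.exp (evalH φ h x - logPartition μ φ h))) from
        ((hm.sub measurable_const).exp).real_toNNReal) w]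
  congr 1
  funext x
  rw [NNReal.smul_def, Real.coe_toNNReal _ (Real.exp_nonneg _), smul_eq_mul]

end AuxLemmas

/-- basic properties of the log-partition function `A` of the kernel
exponential family with bounded kernel `k(x,x) ≤ K²`: (i) the Gâteaux derivative of `A`
at `f` in direction `u` is `∫ u dP_f`; (ii) `∫ (f-g) dP_g ≤ A(f) - A(g) ≤ ∫ (f-g) dP_f`;
(iii) `|A(f) - A(g)| ≤ K·‖f-g‖`. -/
theorem logPartition_basic {X : Type*} [MeasurableSpace X]
    {H : Type*} [NormedAddCommGroup H] [InnerProductSpace ℝ H]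
    (φ : X → H) (hmeas : ∀ h : H, Measurable (evalH φ h))
    (K : ℝ) (hK0 : 0 ≤ K) (hK : ∀ x, (inner ℝ (φ x) (φ x) : ℝ) ≤ K ^ 2)
    (μ : Measure X) (hμ : μ ≠ 0)
    (f g : H)
    (hf : Integrable (fun x => Real.exp (evalH φ f x)) μ)
    (hg : Integrable (fun x => Real.exp (evalH φ g x)) μ) :
    (∀ u : H,
      Tendsto (fun t : ℝ => (logPartition μ φ (f + t • u) - logPartition μ φ f) / t)
        (nhdsWithin 0 {(0 : ℝ)}ᶜ) (nhds (∫ x, evalH φ u x ∂(Pexp μ φ f)))) ∧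
      (∫ x, (evalH φ f x - evalH φ g x) ∂(Pexp μ φ g) ≤
          logPartition μ φ f - logPartition μ φ g ∧
        logPartition μ φ f - logPartition μ φ g ≤
          ∫ x, (evalH φ f x - evalH φ g x) ∂(Pexp μ φ f)) ∧
      |logPartition μ φ f - logPartition μ φ g| ≤ K * ‖f - g‖ := by
  -- pointwise bounds
  have hφ : ∀ x, ‖φ x‖ ≤ K := by
    intro x
    have h1 := hK x
    rw [real_inner_self_eq_norm_sq] at h1
    exact (pow_le_pow_iff_left₀ (norm_nonneg _) hK0 two_ne_zero).mp h1
  have hbd : ∀ (h : H) (x : X), |evalH φ h x| ≤ ‖h‖ * K := by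
    intro h x
    calc |evalH φ h x| ≤ ‖h‖ * ‖φ x‖ := abs_real_inner_le_norm h (φ x)
      _ ≤ ‖h‖ * K := mul_le_mul_of_nonneg_left (hφ x) (norm_nonneg _)
  -- μ is finite
  haveI : IsFiniteMeasure μ := by
    have hc : Integrable (fun _ : X => Real.exp (-(‖f‖ * K))) μ := by
      refine hf.mono' aestronglyMeasurable_const (ae_of_all _ fun x => ?_)
      rw [Real.norm_eq_abs, abs_of_nonneg (Real.exp_nonneg _)]
      exact Real.exp_le_exp.2 (by linarith [(abs_le.1 (hbd f x)).1])
    rcases (integrable_const_iff).mp hc with h0 | hfin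
    · exact absurd h0 (Real.exp_ne_zero _)
    · exact hfin
  -- positivity of partition functions
  have hZpos : ∀ h : H, Integrable (fun x => Real.exp (evalH φ h x)) μ →
      0 < ∫ x, Real.exp (evalH φ h x) ∂μ := by
    intro h hint
    rw [integral_pos_iff_support_of_nonneg (fun x => (Real.exp_pos _).le) hint]
    have hsupp : (Function.support fun x => Real.exp (evalH φ h x)) = Set.univ := by
      ext x; simp [Function.support, (Real.exp_pos _).ne']
    rw [hsupp]
    exact Measure.measure_univ_pos.mpr hμ
  have hZf : 0 < ∫ x, Real.exp (evalH φ f x) ∂μ := hZpos f hf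
  have hZg : 0 < ∫ x, Real.exp (evalH φ g x) ∂μ := hZpos g hg
  -- P_h is a probability measure
  have hprob : ∀ h : H, Integrable (fun x => Real.exp (evalH φ h x)) μ →
      IsProbabilityMeasure (Pexp μ φ h) := by
    intro h hint
    have hpos := hZpos h hint
    constructor
    rw [Pexp, withDensity_apply _ MeasurableSet.univ, Measure.restrict_univ,
        ← ofReal_integral_eq_lintegral_ofReal
          ((hint.mul_const (Real.exp (logPartition μ φ h))⁻¹).congr (ae_of_all _ fun x => by
            rw [Real.exp_sub, div_eq_mul_inv]))
          (ae_of_all _ fun x => Real.exp_nonneg _)]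
    have heq : ∀ x, Real.exp (evalH φ h x - logPartition μ φ h)
        = Real.exp (evalH φ h x) * (Real.exp (logPartition μ φ h))⁻¹ := fun x => by
      rw [Real.exp_sub, div_eq_mul_inv]
    simp_rw [heq]
    rw [integral_mul_const, logPartition, Real.exp_log hpos,
        mul_inv_cancel₀ (ne_of_gt hpos)]
    exact ENNReal.ofReal_one
  haveI hPf : IsProbabilityMeasure (Pexp μ φ f) := hprob f hf
  haveI hPg : IsProbabilityMeasure (Pexp μ φ g) := hprob g hg
  -- ∫ w dP_h = (∫ e^h * w dμ) / Z_h
  have hPint : ∀ h : H, Integrable (fun x => Real.exp (evalH φ h x)) μ → ∀ w : X → ℝ,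
      ∫ x, w x ∂(Pexp μ φ h)
        = (∫ x, Real.exp (evalH φ h x) * w x ∂μ) / (∫ x, Real.exp (evalH φ h x) ∂μ) := by
    intro h hint w
    rw [myPexpInt μ φ h (hmeas h) w]
    have heq : ∀ x, Real.exp (evalH φ h x - logPartition μ φ h) * w x
        = (Real.exp (evalH φ h x) * w x) * (Real.exp (logPartition μ φ h))⁻¹ := fun x => by
      rw [Real.exp_sub]; ring
    simp_rw [heq]
    rw [integral_mul_const, logPartition, Real.exp_log (hZpos h hint), div_eq_mul_inv]
  -- difference bound
  have hw : ∀ x, |evalH φ f x - evalH φ g x| ≤ ‖f - g‖ * K := by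
    intro x
    have h1 := hbd (f - g) x
    have h2 : evalH φ (f - g) x = evalH φ f x - evalH φ g x := by
      simp [evalH, inner_sub_left]
    rwa [h2] at h1
  have hwm : Measurable fun x => evalH φ f x - evalH φ g x := (hmeas f).sub (hmeas g)
  -- Jensen-type bound : ∫ (f-g) dP_g ≤ A f - A g
  have hkey : ∀ f' g' : H, Integrable (fun x => Real.exp (evalH φ f' x)) μ →
      Integrable (fun x => Real.exp (evalH φ g' x)) μ →
      ∫ x, (evalH φ f' x - evalH φ g' x) ∂(Pexp μ φ g')
        ≤ logPartition μ φ f' - logPartition μ φ g' := by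
    intro f' g' hf' hg'
    haveI := hprob g' hg'
    have hZf' := hZpos f' hf'
    have hZg' := hZpos g' hg'
    have hwb : ∀ x, |evalH φ f' x - evalH φ g' x| ≤ ‖f' - g'‖ * K := by
      intro x
      have h1 := hbd (f' - g') x
      have h2 : evalH φ (f' - g') x = evalH φ f' x - evalH φ g' x := by
        simp [evalH, inner_sub_left]
      rwa [h2] at h1
    have hwm' : Measurable fun x => evalH φ f' x - evalH φ g' x := (hmeas f').sub (hmeas g')
    have hint1 : Integrable (fun x => evalH φ f' x - evalH φ g' x) (Pexp μ φ g') :=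
      myIntBdd hwm' hwb
    have hint2 : Integrable (fun x => Real.exp (evalH φ f' x - evalH φ g' x)) (Pexp μ φ g') :=
      myIntBdd hwm'.exp (fun x => by
        rw [abs_of_nonneg (Real.exp_nonneg _)]
        exact Real.exp_le_exp.2 (abs_le.1 (hwb x)).2)
    have hj := myJensen (Pexp μ φ g') _ hint1 hint2
    have hEq : ∫ x, Real.exp (evalH φ f' x - evalH φ g' x) ∂(Pexp μ φ g')
        = Real.exp (logPartition μ φ f' - logPartition μ φ g') := by
      rw [hPint g' hg' _]
      have heq : ∀ x, Real.exp (evalH φ g' x) * Real.exp (evalH φ f' x - evalH φ g' x)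
          = Real.exp (evalH φ f' x) := fun x => by
        rw [← Real.exp_add]; ring_nf
      simp_rw [heq]
      rw [logPartition, logPartition, Real.exp_sub, Real.exp_log hZf', Real.exp_log hZg']
    rw [hEq] at hj
    exact Real.exp_le_exp.1 hj
  have hlow : ∫ x, (evalH φ f x - evalH φ g x) ∂(Pexp μ φ g)
      ≤ logPartition μ φ f - logPartition μ φ g := hkey f g hf hg
  have hupp : logPartition μ φ f - logPartition μ φ g
      ≤ ∫ x, (evalH φ f x - evalH φ g x) ∂(Pexp μ φ f) := by
    have h1 := hkey g f hg hf
    have h2 : ∫ x, (evalH φ g x - evalH φ f x) ∂(Pexp μ φ f)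
        = -∫ x, (evalH φ f x - evalH φ g x) ∂(Pexp μ φ f) := by
      rw [← integral_neg]
      congr 1; funext x; ring
    rw [h2] at h1
    linarith
  refine ⟨?_, ⟨hlow, hupp⟩, ?_⟩
  · -- part (i)
    intro u
    have heval : ∀ (t : ℝ) (x : X), evalH φ (f + t • u) x = evalH φ f x + t * evalH φ u x := by
      intro t x
      simp [evalH, inner_add_left, real_inner_smul_left]
    set Fz : ℝ → X → ℝ := fun t x => Real.exp (evalH φ f x + t * evalH φ u x) with hFz
    set F' : ℝ → X → ℝ := fun t x => Real.exp (evalH φ f x + t * evalH φ u x) * evalH φ u x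
      with hF'
    have hFmeas : ∀ t : ℝ, Measurable (Fz t) := fun t =>
      ((hmeas f).add ((hmeas u).const_mul t)).exp
    have hbound : ∀ x : X, ∀ t ∈ Metric.ball (0 : ℝ) 1,
        ‖F' t x‖ ≤ Real.exp (‖f‖ * K + ‖u‖ * K) * (‖u‖ * K) := by
      intro x t ht
      have ht1 : |t| ≤ 1 := le_of_lt (by simpa [Real.dist_eq] using ht)
      have hu := hbd u x
      have hfx := hbd f x
      have htu : |t * evalH φ u x| ≤ ‖u‖ * K := by
        rw [abs_mul]
        calc |t| * |evalH φ u x| ≤ 1 * (‖u‖ * K) :=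
              mul_le_mul ht1 hu (abs_nonneg _) zero_le_one
          _ = ‖u‖ * K := one_mul _
      rw [Real.norm_eq_abs, abs_mul, abs_of_nonneg (Real.exp_nonneg _)]
      have h1 : evalH φ f x + t * evalH φ u x ≤ ‖f‖ * K + ‖u‖ * K := by
        have := (abs_le.1 hfx).2
        have := (abs_le.1 htu).2
        linarith
      exact mul_le_mul (Real.exp_le_exp.2 h1) hu (abs_nonneg _) (Real.exp_nonneg _)
    have hFint : Integrable (Fz 0) μ := by
      refine myIntBdd (hFmeas 0) (C := Real.exp (‖f‖ * K)) fun x => ?_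
      rw [abs_of_nonneg (Real.exp_nonneg _)]
      refine Real.exp_le_exp.2 ?_
      have := (abs_le.1 (hbd f x)).2
      simp only [zero_mul, add_zero]
      linarith
    have hder := hasDerivAt_integral_of_dominated_loc_of_deriv_le
      (F := Fz) (F' := F') (x₀ := (0 : ℝ))
      (bound := fun _ => Real.exp (‖f‖ * K + ‖u‖ * K) * (‖u‖ * K)) (Metric.ball_mem_nhds 0 one_pos)
      (Eventually.of_forall fun t => (hFmeas t).aestronglyMeasurable)
      hFint
      (((hFmeas 0).mul (hmeas u)).aestronglyMeasurable)
      (ae_of_all _ fun x t ht => hbound x t ht)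
      (integrable_const _)
      (ae_of_all _ fun x t _ => by
        have h1 : HasDerivAt (fun s : ℝ => evalH φ f x + s * evalH φ u x) (evalH φ u x) t :=
          (hasDerivAt_mul_const (evalH φ u x)).const_add (evalH φ f x)
        exact h1.exp)
    have hZ0pos : 0 < ∫ x, Fz 0 x ∂μ := by
      have : (fun x => Fz 0 x) = fun x => Real.exp (evalH φ f x) := by
        funext x; simp [hFz]
      rw [this]; exact hZf
    have hlog := hder.2.log (ne_of_gt hZ0pos)
    have hfuneq : (fun t : ℝ => Real.log (∫ x, Fz t x ∂μ))
        = fun t : ℝ => logPartition μ φ (f + t • u) := by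
      funext t
      rw [logPartition]
      congr 1
      simp only [hFz, heval]
    have hval : (∫ x, F' 0 x ∂μ) / (∫ x, Fz 0 x ∂μ) = ∫ x, evalH φ u x ∂(Pexp μ φ f) := by
      rw [hPint f hf (evalH φ u)]
      congr 1
      · congr 1; funext x; simp [hF']
      · congr 1; funext x; simp [hFz]
    rw [hfuneq, hval] at hlog
    have := hasDerivAt_iff_tendsto_slope.mp hlog
    refine this.congr fun t => ?_
    simp [slope_def_field, zero_smul]
  · -- part (iii)
    have hub : ∫ x, (evalH φ f x - evalH φ g x) ∂(Pexp μ φ f) ≤ ‖f - g‖ * K := by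
      have h1 : ∫ x, (evalH φ f x - evalH φ g x) ∂(Pexp μ φ f)
          ≤ ∫ _, ‖f - g‖ * K ∂(Pexp μ φ f) :=
        integral_mono (myIntBdd hwm hw) (integrable_const _) fun x => (abs_le.1 (hw x)).2
      rwa [integral_const, Measure.real, measure_univ, ENNReal.toReal_one, one_smul] at h1
    have hlb : -(‖f - g‖ * K) ≤ ∫ x, (evalH φ f x - evalH φ g x) ∂(Pexp μ φ g) := by
      have h1 : ∫ _, -(‖f - g‖ * K) ∂(Pexp μ φ g)
          ≤ ∫ x, (evalH φ f x - evalH φ g x) ∂(Pexp μ φ g) :=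
        integral_mono (integrable_const _) (myIntBdd hwm hw) fun x => (abs_le.1 (hw x)).1
      rwa [integral_const, Measure.real, measure_univ, ENNReal.toReal_one, one_smul] at h1
    rw [abs_le]
    constructor
    · rw [show K * ‖f - g‖ = ‖f - g‖ * K from mul_comm _ _]
      linarith
    · rw [show K * ‖f - g‖ = ‖f - g‖ * K from mul_comm _ _]
      linarith
end

section
/- Let H be an RKHS of real-valued functions on X with kernel k satisfying sup_{x∈X} k(x,x) ≤ 1, and let μ be a Borel measure on X with μ(X) = 1, so that P₀ := μ equals P_f for f = 0. Let r ≥ (log 2)/4 and f, g ∈ H with ‖f‖ ≤ r and ‖g‖ ≤ r (and ∫ e^{f} dμ, ∫ e^{g} dμ < ∞). Then TV(P_f, P_g) ≥ (‖f−g‖ / (32·r·e^{2r})) · ξ(H), where ξ(H) := inf_{s ∈ H, ‖s‖ = 1} ∫ |s(x) − ∫ s dμ|² dμ(x). -/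
open MeasureTheory Filter
open scoped ENNReal NNReal

/-- `ξ(H) = inf_{s ∈ H, ‖s‖ = 1} ∫ |s(x) - ∫ s dμ|² dμ(x)` for the RKHS given by the
feature map `φ`. -/
noncomputable def xiH {X H : Type*} [MeasurableSpace X] [NormedAddCommGroup H]
    [InnerProductSpace ℝ H] (φ : X → H) (μ : Measure X) : ℝ :=
  ⨅ s : {s : H // ‖s‖ = 1}, ∫ x, |evalH φ s.1 x - ∫ y, evalH φ s.1 y ∂μ| ^ 2 ∂μ

private lemma exp_diff_lower {R a b : ℝ} (hb : |b| ≤ R) (hba : b ≤ a) :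
    Real.exp (-R) * (a - b) ≤ Real.exp a - Real.exp b := by
  have h1 : a - b + 1 ≤ Real.exp (a - b) := Real.add_one_le_exp (a - b)
  have h2 : Real.exp (a - b) * Real.exp b = Real.exp a := by
    rw [← Real.exp_add]; ring_nf
  have h3 : Real.exp (-R) ≤ Real.exp b := Real.exp_le_exp.2 (by have := abs_le.1 hb; linarith [this.1])
  nlinarith [Real.exp_pos b]

private lemma exp_abs_diff_lower {R a b : ℝ} (ha : |a| ≤ R) (hb : |b| ≤ R) :
    Real.exp (-R) * |a - b| ≤ |Real.exp a - Real.exp b| := by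
  rcases le_total b a with h | h
  · rw [abs_of_nonneg (sub_nonneg.2 h), abs_of_nonneg (sub_nonneg.2 (Real.exp_le_exp.2 h))]
    exact exp_diff_lower hb h
  · rw [abs_sub_comm a b, abs_sub_comm (Real.exp a) (Real.exp b),
      abs_of_nonneg (sub_nonneg.2 h), abs_of_nonneg (sub_nonneg.2 (Real.exp_le_exp.2 h))]
    exact exp_diff_lower ha h

private lemma int_bdd {X : Type*} [MeasurableSpace X] (μ : MeasureTheory.Measure X)
    [MeasureTheory.IsFiniteMeasure μ] {u : X → ℝ} (hu : Measurable u) {C : ℝ}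
    (hC : ∀ x, |u x| ≤ C) : MeasureTheory.Integrable u μ :=
  MeasureTheory.Integrable.mono' (MeasureTheory.integrable_const C) hu.aestronglyMeasurable
    (Filter.Eventually.of_forall fun x => by simpa using hC x)

set_option maxHeartbeats 1000000 in
/-- lower bound on the TV distance between members of the kernel
exponential family in terms of the RKHS norm of the parameters and `ξ(H)`, for a
bounded kernel `k(x,x) ≤ 1` and a probability base measure `μ`. -/
theorem tv_lower_bound_rkhs_norm {X : Type*} [MeasurableSpace X]
    {H : Type*} [NormedAddCommGroup H] [InnerProductSpace ℝ H]
    (φ : X → H) (hmeas : ∀ h : H, Measurable (evalH φ h))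
    (hk : ∀ x, (inner ℝ (φ x) (φ x) : ℝ) ≤ 1)
    (μ : Measure X) [IsProbabilityMeasure μ]
    (r : ℝ) (hr : Real.log 2 / 4 ≤ r)
    (f g : H) (hfr : ‖f‖ ≤ r) (hgr : ‖g‖ ≤ r)
    (hf : Integrable (fun x => Real.exp (evalH φ f x)) μ)
    (hg : Integrable (fun x => Real.exp (evalH φ g x)) μ) :
    ‖f - g‖ / (32 * r * Real.exp (2 * r)) * xiH φ μ ≤
      TV (Pexp μ φ f) (Pexp μ φ g) := by
  have hlog2 : (1:ℝ)/2 < Real.log 2 := by linarith [Real.log_two_gt_d9]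
  have hrpos : 0 < r := by linarith
  have hr8 : (1:ℝ)/8 ≤ r := by linarith
  -- kernel bound
  have hφ : ∀ x, ‖φ x‖ ≤ 1 := by
    intro x
    have h1 : (inner ℝ (φ x) (φ x) : ℝ) = ‖φ x‖ ^ 2 := real_inner_self_eq_norm_sq (φ x)
    nlinarith [hk x, norm_nonneg (φ x)]
  have hbnd : ∀ (h : H) (x : X), |evalH φ h x| ≤ ‖h‖ := by
    intro h x
    calc |evalH φ h x| ≤ ‖h‖ * ‖φ x‖ := abs_real_inner_le_norm h (φ x)
    _ ≤ ‖h‖ * 1 := mul_le_mul_of_nonneg_left (hφ x) (norm_nonneg h)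
    _ = ‖h‖ := mul_one _
  -- TV is a sup of nonneg terms, so nonneg
  have hTVnn : 0 ≤ TV (Pexp μ φ f) (Pexp μ φ g) :=
    Real.iSup_nonneg fun A => abs_nonneg _
  set d := ‖f - g‖ with hd
  by_cases hd0 : d = 0
  · rw [hd0]
    simpa using hTVnn
  have hdpos : 0 < d := lt_of_le_of_ne (norm_nonneg _) (Ne.symm hd0)
  have hd2r : d ≤ 2 * r := by
    calc d ≤ ‖f‖ + ‖g‖ := norm_sub_le f g
    _ ≤ 2 * r := by linarith
  -- bounds on log partition
  have hlogP : ∀ h : H, ‖h‖ ≤ r → Integrable (fun x => Real.exp (evalH φ h x)) μ →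
      |logPartition μ φ h| ≤ r := by
    intro h hhr hint
    have hptw : ∀ x, Real.exp (-r) ≤ Real.exp (evalH φ h x) ∧
        Real.exp (evalH φ h x) ≤ Real.exp r := by
      intro x
      have := abs_le.1 ((hbnd h x).trans hhr)
      exact ⟨Real.exp_le_exp.2 (by linarith [this.1]), Real.exp_le_exp.2 this.2⟩
    have hlow : Real.exp (-r) ≤ ∫ x, Real.exp (evalH φ h x) ∂μ := by
      calc Real.exp (-r) = ∫ _, Real.exp (-r) ∂μ := by simp
      _ ≤ ∫ x, Real.exp (evalH φ h x) ∂μ :=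
        integral_mono (integrable_const _) hint fun x => (hptw x).1
    have hhigh : ∫ x, Real.exp (evalH φ h x) ∂μ ≤ Real.exp r := by
      calc ∫ x, Real.exp (evalH φ h x) ∂μ ≤ ∫ _, Real.exp r ∂μ :=
        integral_mono hint (integrable_const _) fun x => (hptw x).2
      _ = Real.exp r := by simp
    rw [logPartition, abs_le]
    constructor
    · have h1 : Real.log (Real.exp (-r)) ≤ Real.log (∫ x, Real.exp (evalH φ h x) ∂μ) :=
        Real.log_le_log (Real.exp_pos _) hlow
      simpa using h1
    · have h1 : Real.log (∫ x, Real.exp (evalH φ h x) ∂μ) ≤ Real.log (Real.exp r) :=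
        Real.log_le_log (lt_of_lt_of_le (Real.exp_pos _) hlow) hhigh
      simpa using h1
  have hAf := hlogP f hfr hf
  have hAg := hlogP g hgr hg
  -- densities
  set F : X → ℝ := fun x => Real.exp (evalH φ f x - logPartition μ φ f) with hF
  set G : X → ℝ := fun x => Real.exp (evalH φ g x - logPartition μ φ g) with hG
  have hFm : Measurable F := (Real.measurable_exp.comp ((hmeas f).sub measurable_const))
  have hGm : Measurable G := (Real.measurable_exp.comp ((hmeas g).sub measurable_const))
  have hexpF : ∀ x, |evalH φ f x - logPartition μ φ f| ≤ 2 * r := by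
    intro x
    have h1 := abs_le.1 ((hbnd f x).trans hfr)
    have h2 := abs_le.1 hAf
    rw [abs_le]; constructor <;> linarith [h1.1, h1.2, h2.1, h2.2]
  have hexpG : ∀ x, |evalH φ g x - logPartition μ φ g| ≤ 2 * r := by
    intro x
    have h1 := abs_le.1 ((hbnd g x).trans hgr)
    have h2 := abs_le.1 hAg
    rw [abs_le]; constructor <;> linarith [h1.1, h1.2, h2.1, h2.2]
  have hFb : ∀ x, |F x| ≤ Real.exp (2*r) := by
    intro x
    rw [abs_of_pos (Real.exp_pos _)]
    exact Real.exp_le_exp.2 (abs_le.1 (hexpF x)).2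
  have hGb : ∀ x, |G x| ≤ Real.exp (2*r) := by
    intro x
    rw [abs_of_pos (Real.exp_pos _)]
    exact Real.exp_le_exp.2 (abs_le.1 (hexpG x)).2
  have hFint : Integrable F μ := int_bdd μ hFm hFb
  have hGint : Integrable G μ := int_bdd μ hGm hGb
  -- finiteness of the two measures and toReal formula
  have hfin : ∀ (h : H), (∀ x, |Real.exp (evalH φ h x - logPartition μ φ h)| ≤ Real.exp (2*r)) →
      Pexp μ φ h Set.univ ≠ ⊤ := by
    intro h hb
    rw [Pexp, withDensity_apply _ MeasurableSet.univ, Measure.restrict_univ]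
    have hle : ∫⁻ x, ENNReal.ofReal (Real.exp (evalH φ h x - logPartition μ φ h)) ∂μ ≤
        ∫⁻ _, ENNReal.ofReal (Real.exp (2*r)) ∂μ := by
      refine lintegral_mono fun x => ENNReal.ofReal_le_ofReal ?_
      have := hb x; rwa [abs_of_pos (Real.exp_pos _)] at this
    refine ne_top_of_le_ne_top ?_ hle
    rw [lintegral_const]
    exact ENNReal.mul_ne_top ENNReal.ofReal_ne_top (by simp)
  have hPfin := hfin f hFb
  have hQfin := hfin g hGb
  have hPeq : ∀ (h : H), Measurable (fun x => Real.exp (evalH φ h x - logPartition μ φ h)) →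
      ∀ (B : Set X), MeasurableSet B →
      ((Pexp μ φ h) B).toReal = ∫ x in B, Real.exp (evalH φ h x - logPartition μ φ h) ∂μ := by
    intro h hm B hB
    rw [Pexp, withDensity_apply _ hB,
      integral_eq_lintegral_of_nonneg_ae (Filter.Eventually.of_forall fun x => (Real.exp_pos _).le)
        hm.aestronglyMeasurable.restrict]
  -- TV lower bound via specific sets
  have hbdd : BddAbove (Set.range fun A : {A : Set X // MeasurableSet A} =>
      |((Pexp μ φ f) A.1).toReal - ((Pexp μ φ g) A.1).toReal|) := by
    refine ⟨((Pexp μ φ f) Set.univ).toReal + ((Pexp μ φ g) Set.univ).toReal, ?_⟩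
    rintro _ ⟨A, rfl⟩
    have h1 : ((Pexp μ φ f) A.1).toReal ≤ ((Pexp μ φ f) Set.univ).toReal :=
      ENNReal.toReal_mono hPfin (measure_mono (Set.subset_univ _))
    have h2 : ((Pexp μ φ g) A.1).toReal ≤ ((Pexp μ φ g) Set.univ).toReal :=
      ENNReal.toReal_mono hQfin (measure_mono (Set.subset_univ _))
    have h3 : (0:ℝ) ≤ ((Pexp μ φ f) A.1).toReal := ENNReal.toReal_nonneg
    have h4 : (0:ℝ) ≤ ((Pexp μ φ g) A.1).toReal := ENNReal.toReal_nonneg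
    rw [abs_le]; constructor <;> linarith
  have habs : ∀ (B : Set X) (hB : MeasurableSet B),
      |((Pexp μ φ f) B).toReal - ((Pexp μ φ g) B).toReal| ≤
        TV (Pexp μ φ f) (Pexp μ φ g) := fun B hB => le_ciSup hbdd ⟨B, hB⟩
  -- split set
  set A : Set X := {x | G x ≤ F x} with hAdef
  have hA : MeasurableSet A := measurableSet_le hGm hFm
  have hS1 : ∫ x in A, |F x - G x| ∂μ ≤ TV (Pexp μ φ f) (Pexp μ φ g) := by
    have e1 : ∫ x in A, |F x - G x| ∂μ = ∫ x in A, (F x - G x) ∂μ :=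
      setIntegral_congr_fun hA fun x hx => abs_of_nonneg (sub_nonneg.2 hx)
    have e2 : ∫ x in A, (F x - G x) ∂μ =
        ((Pexp μ φ f) A).toReal - ((Pexp μ φ g) A).toReal := by
      rw [hPeq f hFm A hA, hPeq g hGm A hA, integral_sub hFint.restrict hGint.restrict]
    rw [e1, e2]
    exact (le_abs_self _).trans (habs A hA)
  have hS2 : ∫ x in Aᶜ, |F x - G x| ∂μ ≤ TV (Pexp μ φ f) (Pexp μ φ g) := by
    have e1 : ∫ x in Aᶜ, |F x - G x| ∂μ = ∫ x in Aᶜ, (G x - F x) ∂μ := by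
      refine setIntegral_congr_fun hA.compl fun x hx => ?_
      have hx' : F x < G x := lt_of_not_ge hx
      rw [abs_sub_comm, abs_of_nonneg (sub_nonneg.2 hx'.le)]
    have e2 : ∫ x in Aᶜ, (G x - F x) ∂μ =
        ((Pexp μ φ g) Aᶜ).toReal - ((Pexp μ φ f) Aᶜ).toReal := by
      rw [hPeq f hFm Aᶜ hA.compl, hPeq g hGm Aᶜ hA.compl,
        integral_sub hGint.restrict hFint.restrict]
    rw [e1, e2]
    refine le_trans ?_ (habs Aᶜ hA.compl)
    rw [abs_sub_comm]
    exact le_abs_self _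
  have hsplit : ∫ x in A, |F x - G x| ∂μ + ∫ x in Aᶜ, |F x - G x| ∂μ = ∫ x, |F x - G x| ∂μ :=
    integral_add_compl hA (hFint.sub hGint).abs
  -- t, c, m
  set c : ℝ := logPartition μ φ f - logPartition μ φ g with hc
  set t : X → ℝ := fun x => evalH φ (f - g) x with ht
  have hteq : ∀ x, t x = evalH φ f x - evalH φ g x := by
    intro x; simp [ht, evalH, inner_sub_left]
  have htm : Measurable t := hmeas _
  have htb : ∀ x, |t x| ≤ d := fun x => hbnd (f - g) x
  have htint : Integrable t μ := int_bdd μ htm htb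
  set m : ℝ := ∫ x, t x ∂μ with hm
  have hmb : |m| ≤ d := by
    calc |m| ≤ ∫ x, |t x| ∂μ := by
          simpa [Real.norm_eq_abs] using norm_integral_le_integral_norm t (μ := μ)
    _ ≤ ∫ _, d ∂μ := integral_mono htint.abs (integrable_const _) htb
    _ = d := by simp
  have hcb : |c| ≤ 2 * r := by
    have h1 := abs_le.1 hAf; have h2 := abs_le.1 hAg
    rw [abs_le]; constructor <;> (simp only [hc]; linarith [h1.1, h1.2, h2.1, h2.2])
  have htcb : ∀ x, |t x - c| ≤ d + 2*r := by
    intro x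
    calc |t x - c| ≤ |t x| + |c| := abs_sub _ _
    _ ≤ d + 2*r := add_le_add (htb x) hcb
  have htcint : Integrable (fun x => |t x - c|) μ :=
    int_bdd μ ((htm.sub measurable_const).abs) (fun x => by simpa using htcb x)
  have htmb : ∀ x, |t x - m| ≤ 2*d := by
    intro x
    calc |t x - m| ≤ |t x| + |m| := abs_sub _ _
    _ ≤ 2*d := by linarith [htb x, hmb]
  have htmint : Integrable (fun x => |t x - m|) μ :=
    int_bdd μ ((htm.sub measurable_const).abs) (fun x => by simpa using htmb x)
  -- pointwise: exp(-(2r)) * |t x - c| ≤ |F x - G x|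
  have hptw : ∀ x, Real.exp (-(2*r)) * |t x - c| ≤ |F x - G x| := by
    intro x
    have h := exp_abs_diff_lower (hexpF x) (hexpG x)
    have he : (evalH φ f x - logPartition μ φ f) - (evalH φ g x - logPartition μ φ g)
        = t x - c := by rw [hteq x, hc]; ring
    simpa [hF, hG, he] using h
  have hL0 : Real.exp (-(2*r)) * ∫ x, |t x - c| ∂μ ≤ ∫ x, |F x - G x| ∂μ := by
    rw [← integral_const_mul]
    exact integral_mono (htcint.const_mul _) (hFint.sub hGint).abs hptw
  -- L1 step: ∫|t-m| ≤ 2 ∫|t-c|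
  have hL1 : ∫ x, |t x - m| ∂μ ≤ 2 * ∫ x, |t x - c| ∂μ := by
    have h2 : |c - m| ≤ ∫ x, |t x - c| ∂μ := by
      have he : c - m = ∫ x, (c - t x) ∂μ := by
        rw [integral_sub (integrable_const c) htint]; simp [hm]
      rw [he]
      calc |∫ x, (c - t x) ∂μ| ≤ ∫ x, |c - t x| ∂μ := by
            simpa [Real.norm_eq_abs] using
              norm_integral_le_integral_norm (fun x => c - t x) (μ := μ)
      _ = ∫ x, |t x - c| ∂μ := by simp [abs_sub_comm]
    have h1 : ∫ x, |t x - m| ∂μ ≤ ∫ x, (|t x - c| + |c - m|) ∂μ :=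
      integral_mono htmint (htcint.add (integrable_const _)) fun x => abs_sub_le (t x) c m
    have h3 : ∫ x, (|t x - c| + |c - m|) ∂μ = (∫ x, |t x - c| ∂μ) + |c - m| := by
      rw [integral_add htcint (integrable_const _)]; simp
    linarith
  -- L2 step: ∫|t-m|^2 ≤ d * ∫|t-m|
  have hprod1 : Integrable (fun x => (t x - m) * t x) μ := by
    refine int_bdd μ ((htm.sub measurable_const).mul htm) (C := 2*d*d) fun x => ?_
    rw [abs_mul]
    exact mul_le_mul (htmb x) (htb x) (abs_nonneg _) (by linarith)
  have hprod2 : Integrable (fun x => (t x - m) * m) μ := by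
    refine int_bdd μ ((htm.sub measurable_const).mul measurable_const) (C := 2*d*d) fun x => ?_
    rw [abs_mul]
    exact mul_le_mul (htmb x) hmb (abs_nonneg _) (by linarith)
  have hzero : ∫ x, (t x - m) ∂μ = 0 := by
    rw [integral_sub htint (integrable_const m)]; simp [hm]
  have hL2 : ∫ x, |t x - m| ^ 2 ∂μ ≤ d * ∫ x, |t x - m| ∂μ := by
    have heq : (fun x => |t x - m| ^ 2) = fun x => (t x - m) * t x - (t x - m) * m := by
      funext x; rw [sq_abs]; ring
    have e1 : ∫ x, |t x - m| ^ 2 ∂μ = ∫ x, (t x - m) * t x ∂μ := by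
      rw [heq, integral_sub hprod1 hprod2, integral_mul_const, hzero]
      simp
    rw [e1, ← integral_const_mul]
    refine integral_mono hprod1 (htmint.const_mul _) fun x => ?_
    calc (t x - m) * t x ≤ |(t x - m) * t x| := le_abs_self _
    _ = |t x - m| * |t x| := abs_mul _ _
    _ ≤ |t x - m| * d := mul_le_mul_of_nonneg_left (htb x) (abs_nonneg _)
    _ = d * |t x - m| := mul_comm _ _
  -- xi step
  set s : H := d⁻¹ • (f - g) with hs
  have hsnorm : ‖s‖ = 1 := by
    rw [hs, norm_smul, Real.norm_eq_abs, abs_of_nonneg (inv_nonneg.2 hdpos.le), ← hd]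
    field_simp
  have hsx : ∀ x, evalH φ s x = d⁻¹ * t x := by
    intro x; simp [hs, ht, evalH, real_inner_smul_left]
  have hxinn : 0 ≤ xiH φ μ := by
    have : Nonempty {s : H // ‖s‖ = 1} := ⟨⟨s, hsnorm⟩⟩
    exact le_ciInf fun u => integral_nonneg fun x => by positivity
  have hbddbelow : BddBelow (Set.range fun u : {s : H // ‖s‖ = 1} =>
      ∫ x, |evalH φ u.1 x - ∫ y, evalH φ u.1 y ∂μ| ^ 2 ∂μ) := by
    refine ⟨0, ?_⟩
    rintro _ ⟨u, rfl⟩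
    exact integral_nonneg fun x => by positivity
  have hxile : xiH φ μ ≤ ∫ x, |evalH φ s x - ∫ y, evalH φ s y ∂μ| ^ 2 ∂μ :=
    ciInf_le hbddbelow ⟨s, hsnorm⟩
  have hsint : ∫ x, |evalH φ s x - ∫ y, evalH φ s y ∂μ| ^ 2 ∂μ =
      d⁻¹ ^ 2 * ∫ x, |t x - m| ^ 2 ∂μ := by
    have him : ∫ y, evalH φ s y ∂μ = d⁻¹ * m := by
      simp only [hsx]; rw [integral_const_mul]
    have hptws : ∀ x, |evalH φ s x - ∫ y, evalH φ s y ∂μ| ^ 2 = d⁻¹ ^ 2 * |t x - m| ^ 2 := by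
      intro x
      rw [hsx x, him, show d⁻¹ * t x - d⁻¹ * m = d⁻¹ * (t x - m) from by ring,
        abs_mul, mul_pow, abs_of_nonneg (inv_nonneg.2 hdpos.le)]
    simp only [hptws]
    exact integral_const_mul _ _
  have hxi : d ^ 2 * xiH φ μ ≤ ∫ x, |t x - m| ^ 2 ∂μ := by
    have h1 : xiH φ μ ≤ d⁻¹ ^ 2 * ∫ x, |t x - m| ^ 2 ∂μ := hsint ▸ hxile
    have h2 := mul_le_mul_of_nonneg_left h1 (sq_nonneg d)
    calc d ^ 2 * xiH φ μ ≤ d ^ 2 * (d⁻¹ ^ 2 * ∫ x, |t x - m| ^ 2 ∂μ) := h2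
    _ = ∫ x, |t x - m| ^ 2 ∂μ := by field_simp
  -- combine
  set e : ℝ := Real.exp (-(2*r)) with heE
  have hepos : 0 < e := Real.exp_pos _
  have k0 : d * xiH φ μ ≤ 2 * ∫ x, |t x - c| ∂μ := by
    have h1 : d ^ 2 * xiH φ μ ≤ d * (2 * ∫ x, |t x - c| ∂μ) := by
      calc d ^ 2 * xiH φ μ ≤ ∫ x, |t x - m| ^ 2 ∂μ := hxi
      _ ≤ d * ∫ x, |t x - m| ∂μ := hL2
      _ ≤ d * (2 * ∫ x, |t x - c| ∂μ) := mul_le_mul_of_nonneg_left hL1 hdpos.le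
    nlinarith
  have k1 : e * (d * xiH φ μ) ≤ 4 * TV (Pexp μ φ f) (Pexp μ φ g) := by
    have h1 : e * (d * xiH φ μ) ≤ e * (2 * ∫ x, |t x - c| ∂μ) :=
      mul_le_mul_of_nonneg_left k0 hepos.le
    have h2 : e * (2 * ∫ x, |t x - c| ∂μ) = 2 * (e * ∫ x, |t x - c| ∂μ) := by ring
    have h3 : e * ∫ x, |t x - c| ∂μ ≤ ∫ x, |F x - G x| ∂μ := hL0
    linarith [hS1, hS2, hsplit]
  -- final arithmetic
  have hE : Real.exp (2*r) = e⁻¹ := by rw [heE, ← Real.exp_neg]; ring_nf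
  rw [hE]
  have hEpos : (0:ℝ) < 32 * r * e⁻¹ := by positivity
  rw [div_mul_eq_mul_div, div_le_iff₀ hEpos]
  have hxidnn : 0 ≤ d * xiH φ μ := mul_nonneg hdpos.le hxinn
  have h32 : 4 ≤ 32 * r := by linarith
  calc d * xiH φ μ = (e * (d * xiH φ μ)) * e⁻¹ := by field_simp
  _ ≤ (4 * TV (Pexp μ φ f) (Pexp μ φ g)) * e⁻¹ :=
      mul_le_mul_of_nonneg_right k1 (by positivity)
  _ ≤ (32 * r * TV (Pexp μ φ f) (Pexp μ φ g)) * e⁻¹ := by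
      have := mul_le_mul_of_nonneg_right h32 hTVnn
      nlinarith [inv_pos.2 hepos]
  _ = TV (Pexp μ φ f) (Pexp μ φ g) * (32 * r * e⁻¹) := by ring
end
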